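/- arXiv:0805.0728 — 6 statements merged into one kernel-verified Lean document; each statement's English description precedes it below -/
import Mathlib

section
/- Suppose there are constants C_h ≥ 1 and h ≥ 0 such that #σ^{-m}(x) ≤ C_h·e^{m·h} for all x ∈ X⁺ and m ∈ ℕ, and suppose 0 < τ⁻ ≤ T(x) ≤ τ⁺ < ∞ for all x and inf F ≥ h + ln 2. Set ω⁻ := (inf F − h)/τ⁺ > 0. Then for every x ∈ X⁺ and every t ∈ ℝ the series defining the renewal sum κ^x(t) converges, κ^x(t) > 0, and there exists a constant C > 0 (independent of x and t) such that κ^x(t) ≤ C·exp(−ω⁻·max(t,0)). -/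
/-! Statement 1: convergence and exponential bound for the renewal sums `κ^x(t)`. -/

variable {A : Type*}

/-- The one-sided subshift of finite type determined by the transition relation `R`. -/
def OneSubshift (R : A → A → Prop) : Set (ℕ → A) :=
  {x | ∀ i : ℕ, R (x i) (x (i + 1))}

/-- The left shift on one-sided sequences. -/
def shiftN (x : ℕ → A) : ℕ → A := fun i => x (i + 1)

/-- Birkhoff sums `S_m f = ∑_{i=0}^{m-1} f ∘ σ^i`. -/
noncomputable def birkhoffN (f : (ℕ → A) → ℝ) (m : ℕ) (x : ℕ → A) : ℝ :=
  ∑ i ∈ Finset.range m, f (shiftN^[i] x)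

/-- The set `σ^{-m}(x)` of `m`-fold preimages of `x` inside the subshift. -/
def preim (R : A → A → Prop) (m : ℕ) (x : ℕ → A) : Set (ℕ → A) :=
  {y ∈ OneSubshift R | shiftN^[m] y = x}

/-- The term `exp(−S_m F(y)) · 1[S_m T(y) ≥ t]` of the renewal sum. -/
noncomputable def renewalTerm (F T : (ℕ → A) → ℝ) (t : ℝ) (m : ℕ) (y : ℕ → A) : ℝ :=
  Real.exp (-(birkhoffN F m y)) * (if t ≤ birkhoffN T m y then 1 else 0)

/-- The renewal sum `κ^x(t)`. -/
noncomputable def kappa (R : A → A → Prop) (F T : (ℕ → A) → ℝ) (x : ℕ → A) (t : ℝ) : ℝ :=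
  ∑' p : (Σ m : ℕ, preim R m x), renewalTerm F T t p.1 p.2.val

set_option maxHeartbeats 1000000 in
lemma shiftN_mem {R : A → A → Prop} {x : ℕ → A} (hx : x ∈ OneSubshift R) :
    shiftN x ∈ OneSubshift R := fun i => hx (i + 1)

lemma shiftN_iter_mem {R : A → A → Prop} {x : ℕ → A} (hx : x ∈ OneSubshift R) (i : ℕ) :
    shiftN^[i] x ∈ OneSubshift R := by
  induction i with
  | zero => exact hx
  | succ n ih => rw [Function.iterate_succ_apply']; exact shiftN_mem ih

lemma birkhoff_le {R : A → A → Prop} {f : (ℕ → A) → ℝ} {c : ℝ}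
    (hc : ∀ z ∈ OneSubshift R, f z ≤ c) {y : ℕ → A} (hy : y ∈ OneSubshift R) (m : ℕ) :
    birkhoffN f m y ≤ m * c := by
  calc birkhoffN f m y ≤ ∑ _i ∈ Finset.range m, c :=
        Finset.sum_le_sum fun i _ => hc _ (shiftN_iter_mem hy i)
    _ = m * c := by simp [mul_comm]

lemma birkhoff_ge {R : A → A → Prop} {f : (ℕ → A) → ℝ} {c : ℝ}
    (hc : ∀ z ∈ OneSubshift R, c ≤ f z) {y : ℕ → A} (hy : y ∈ OneSubshift R) (m : ℕ) :
    m * c ≤ birkhoffN f m y := by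
  calc (m : ℝ) * c = ∑ _i ∈ Finset.range m, c := by simp [mul_comm]
    _ ≤ birkhoffN f m y := Finset.sum_le_sum fun i _ => hc _ (shiftN_iter_mem hy i)

lemma exists_preim {R : A → A → Prop}
    (hsurj : ∀ x ∈ OneSubshift R, ∃ y ∈ OneSubshift R, shiftN y = x)
    {x : ℕ → A} (hx : x ∈ OneSubshift R) (m : ℕ) : ∃ y, y ∈ preim R m x := by
  induction m with
  | zero => exact ⟨x, hx, rfl⟩
  | succ n ih =>
      obtain ⟨y, hyX, hy⟩ := ih
      obtain ⟨z, hzX, hz⟩ := hsurj y hyX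
      exact ⟨z, hzX, by rw [Function.iterate_succ_apply, hz, hy]⟩

/-- Under the counting bound `#σ^{-m}(x) ≤ C_h e^{m h}`, the bounds
`0 < τ⁻ ≤ T ≤ τ⁺` and `inf F ≥ h + ln 2`, with `ω⁻ := (inf F − h)/τ⁺ > 0`,
the renewal sum converges, is positive, and `κ^x(t) ≤ C · exp(−ω⁻ · max(t,0))`
for a constant `C` independent of `x` and `t`. -/
theorem stmt1 [Fintype A] [Nonempty A] (R : A → A → Prop)
    (hXne : (OneSubshift R).Nonempty)
    (hsurj : ∀ x ∈ OneSubshift R, ∃ y ∈ OneSubshift R, shiftN y = x)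
    (F T : (ℕ → A) → ℝ) (Ch h : ℝ) (hCh : 1 ≤ Ch) (hh : 0 ≤ h)
    (hfin : ∀ (m : ℕ) (x : ℕ → A), (preim R m x).Finite)
    (hcard : ∀ (m : ℕ), ∀ x ∈ OneSubshift R,
      (Nat.card (preim R m x) : ℝ) ≤ Ch * Real.exp (m * h))
    (τm τp : ℝ) (hτm : 0 < τm)
    (hT : ∀ x ∈ OneSubshift R, τm ≤ T x ∧ T x ≤ τp)
    (hF : h + Real.log 2 ≤ sInf (F '' OneSubshift R)) :
    0 < (sInf (F '' OneSubshift R) - h) / τp ∧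
    (∀ x ∈ OneSubshift R, ∀ t : ℝ,
      Summable (fun p : (Σ m : ℕ, preim R m x) => renewalTerm F T t p.1 p.2.val) ∧
      0 < kappa R F T x t) ∧
    ∃ C > 0, ∀ x ∈ OneSubshift R, ∀ t : ℝ,
      kappa R F T x t ≤
        C * Real.exp (-((sInf (F '' OneSubshift R) - h) / τp) * max t 0) := by
  classical
  obtain ⟨x₀, hx₀⟩ := hXne
  have hτp : 0 < τp := lt_of_lt_of_le hτm ((hT x₀ hx₀).1.trans (hT x₀ hx₀).2)
  have hlog2 : (0:ℝ) < Real.log 2 := Real.log_pos one_lt_two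
  set α := sInf (F '' OneSubshift R) with hαdef
  have hbdd : BddBelow (F '' OneSubshift R) := by
    by_contra hb
    have h0 : α = 0 := by rw [hαdef]; exact Real.sInf_of_not_bddBelow hb
    linarith
  have hαF : ∀ z ∈ OneSubshift R, α ≤ F z := fun z hz => csInf_le hbdd ⟨z, hz, rfl⟩
  have hβ2 : Real.log 2 ≤ α - h := by linarith
  have hβpos : 0 < α - h := lt_of_lt_of_le hlog2 hβ2
  set β := α - h with hβdef
  set r := Real.exp (-β) with hrdef
  have hr0 : 0 < r := Real.exp_pos _
  have hrhalf : r ≤ 1/2 := by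
    have h2 : Real.exp (-β) ≤ Real.exp (-(Real.log 2)) := Real.exp_le_exp.mpr (by linarith)
    have h3 : Real.exp (-(Real.log 2)) = 1/2 := by
      rw [Real.exp_neg, Real.exp_log (by norm_num : (0:ℝ) < 2)]; norm_num
    rw [hrdef]; linarith
  have hr1 : r < 1 := lt_of_le_of_lt hrhalf (by norm_num)
  have hω : 0 < β / τp := div_pos hβpos hτp
  have hCh0 : (0:ℝ) < Ch := lt_of_lt_of_le one_pos hCh
  have key : ∀ x ∈ OneSubshift R, ∀ t : ℝ,
      Summable (fun p : (Σ m : ℕ, preim R m x) => renewalTerm F T t p.1 p.2.val) ∧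
      0 < kappa R F T x t ∧
      kappa R F T x t ≤ (2 * Ch) * Real.exp (-(β / τp) * max t 0) := by
    intro x hx t
    have hterm_nonneg : ∀ (m : ℕ) (y : ℕ → A), 0 ≤ renewalTerm F T t m y := by
      intro m y
      apply mul_nonneg (Real.exp_pos _).le
      split_ifs <;> norm_num
    set M := ⌈max t 0 / τp⌉₊ with hMdef
    have bnd_le : ∀ (m : ℕ), ∀ y ∈ preim R m x,
        renewalTerm F T t m y ≤ Real.exp (-(m * α)) * (if t ≤ (m:ℝ) * τp then 1 else 0) := by
      intro m y hy
      have hyX : y ∈ OneSubshift R := hy.1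
      unfold renewalTerm
      by_cases hif : t ≤ birkhoffN T m y
      · have hTle : birkhoffN T m y ≤ m * τp :=
          birkhoff_le (fun z hz => (hT z hz).2) hyX m
        rw [if_pos hif, if_pos (hif.trans hTle), mul_one, mul_one]
        exact Real.exp_le_exp.mpr (neg_le_neg (birkhoff_ge hαF hyX m))
      · rw [if_neg hif, mul_zero]
        apply mul_nonneg (Real.exp_pos _).le
        split_ifs <;> norm_num
    have hfib_sum : ∀ m : ℕ, Summable (fun y : (preim R m x) => renewalTerm F T t m y.val) := by
      intro m; haveI := (hfin m x).to_subtype; exact Summable.of_finite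
    have hg_nonneg : ∀ m : ℕ, 0 ≤ ∑' y : (preim R m x), renewalTerm F T t m y.val :=
      fun m => tsum_nonneg fun y => hterm_nonneg m y.val
    have hg_le : ∀ m : ℕ, (∑' y : (preim R m x), renewalTerm F T t m y.val) ≤
        Ch * Real.exp (m * h) *
        (Real.exp (-(m * α)) * (if t ≤ (m:ℝ) * τp then 1 else 0)) := by
      intro m
      haveI := (hfin m x).fintype
      have hb0 : (0:ℝ) ≤ Real.exp (-(m * α)) * (if t ≤ (m:ℝ) * τp then 1 else 0) := by
        apply mul_nonneg (Real.exp_pos _).le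
        split_ifs <;> norm_num
      calc (∑' y : (preim R m x), renewalTerm F T t m y.val)
          = ∑ y : (preim R m x), renewalTerm F T t m y.val := tsum_fintype _
        _ ≤ ∑ _y : (preim R m x),
              Real.exp (-(m * α)) * (if t ≤ (m:ℝ) * τp then 1 else 0) :=
            Finset.sum_le_sum fun y _ => bnd_le m y.val y.2
        _ = (Nat.card (preim R m x) : ℝ) *
              (Real.exp (-(m * α)) * (if t ≤ (m:ℝ) * τp then 1 else 0)) := by
            rw [Finset.sum_const, Nat.card_eq_fintype_card]
            simp [nsmul_eq_mul, Finset.card_univ]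
        _ ≤ Ch * Real.exp (m * h) *
              (Real.exp (-(m * α)) * (if t ≤ (m:ℝ) * τp then 1 else 0)) :=
            mul_le_mul_of_nonneg_right (hcard m x hx) hb0
    have hc_nonneg : ∀ m : ℕ, (0:ℝ) ≤ (if M ≤ m then Ch * r ^ m else 0) := by
      intro m; split_ifs <;> positivity
    have hrm : ∀ m : ℕ, Real.exp ((m:ℝ) * h) * Real.exp (-((m:ℝ) * α)) = r ^ m := by
      intro m
      rw [hrdef, ← Real.exp_nat_mul, ← Real.exp_add]
      congr 1
      rw [hβdef]; ring
    have hgc : ∀ m : ℕ, (∑' y : (preim R m x), renewalTerm F T t m y.val) ≤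
        (if M ≤ m then Ch * r ^ m else 0) := by
      intro m
      by_cases hind : t ≤ (m:ℝ) * τp
      · have hMm : M ≤ m := by
          rw [hMdef]
          apply Nat.ceil_le.mpr
          rw [div_le_iff₀ hτp]
          exact max_le hind (by positivity)
        rw [if_pos hMm]
        calc (∑' y : (preim R m x), renewalTerm F T t m y.val)
            ≤ Ch * Real.exp (m * h) * (Real.exp (-(m * α)) * 1) := by
              simpa [if_pos hind] using hg_le m
          _ = Ch * r ^ m := by rw [mul_one, mul_assoc, hrm m]
      · have hz : (∑' y : (preim R m x), renewalTerm F T t m y.val) ≤ 0 := by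
          simpa [if_neg hind] using hg_le m
        exact hz.trans (hc_nonneg m)
    have hgeo : Summable (fun m : ℕ => Ch * r ^ m) :=
      (summable_geometric_of_lt_one hr0.le hr1).mul_left Ch
    have hc_le : ∀ m : ℕ, (if M ≤ m then Ch * r ^ m else 0) ≤ Ch * r ^ m := by
      intro m; split_ifs
      · exact le_rfl
      · positivity
    have hc_sum : Summable (fun m : ℕ => if M ≤ m then Ch * r ^ m else 0) :=
      Summable.of_nonneg_of_le hc_nonneg hc_le hgeo
    have hg_sum : Summable (fun m : ℕ => ∑' y : (preim R m x), renewalTerm F T t m y.val) :=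
      Summable.of_nonneg_of_le hg_nonneg hgc hc_sum
    have hsig : Summable (fun p : (Σ m : ℕ, preim R m x) => renewalTerm F T t p.1 p.2.val) :=
      (summable_sigma_of_nonneg (f := fun p : (Σ m : ℕ, preim R m x) => renewalTerm F T t p.1 p.2.val) (fun p => hterm_nonneg p.1 p.2.val)).mpr ⟨hfib_sum, hg_sum⟩
    have hkappa : kappa R F T x t = ∑' m : ℕ, ∑' y : (preim R m x), renewalTerm F T t m y.val :=
      Summable.tsum_sigma hsig
    have hfirst : ∑ i ∈ Finset.range M, (if M ≤ i then Ch * r ^ i else 0) = 0 := by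
      apply Finset.sum_eq_zero
      intro i hi
      rw [if_neg (Nat.not_le.mpr (Finset.mem_range.mp hi))]
    have htail : ∑' k : ℕ, (if M ≤ k + M then Ch * r ^ (k + M) else 0)
        = Ch * r ^ M * (1 - r)⁻¹ := by
      have hck : ∀ k : ℕ, (if M ≤ k + M then Ch * r ^ (k + M) else 0)
          = (Ch * r ^ M) * r ^ k := by
        intro k
        rw [if_pos (Nat.le_add_left M k), pow_add]
        ring
      calc (∑' k : ℕ, (if M ≤ k + M then Ch * r ^ (k + M) else 0))
          = ∑' k : ℕ, (Ch * r ^ M) * r ^ k := tsum_congr hck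
        _ = Ch * r ^ M * (1 - r)⁻¹ := by
            rw [tsum_mul_left, tsum_geometric_of_lt_one hr0.le hr1]
    have hc_tsum : ∑' m : ℕ, (if M ≤ m then Ch * r ^ m else 0) = Ch * r ^ M * (1 - r)⁻¹ := by
      rw [← hc_sum.sum_add_tsum_nat_add M, hfirst, htail, zero_add]
    have hinv : (1 - r)⁻¹ ≤ 2 := by
      rw [show (2:ℝ) = (1/2 : ℝ)⁻¹ by norm_num]
      apply inv_anti₀ (by norm_num)
      linarith
    have hrM : r ^ M ≤ Real.exp (-(β / τp) * max t 0) := by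
      rw [hrdef, ← Real.exp_nat_mul]
      apply Real.exp_le_exp.mpr
      have hM : max t 0 / τp ≤ (M:ℝ) := Nat.le_ceil _
      have h2 : β * (max t 0 / τp) ≤ β * M := mul_le_mul_of_nonneg_left hM hβpos.le
      have h1 : β / τp * max t 0 = β * (max t 0 / τp) := by ring
      nlinarith [h2]
    have hbound : kappa R F T x t ≤ (2 * Ch) * Real.exp (-(β / τp) * max t 0) := by
      rw [hkappa]
      calc (∑' m : ℕ, ∑' y : (preim R m x), renewalTerm F T t m y.val)
          ≤ ∑' m : ℕ, (if M ≤ m then Ch * r ^ m else 0) := Summable.tsum_le_tsum hgc hg_sum hc_sum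
        _ = Ch * r ^ M * (1 - r)⁻¹ := hc_tsum
        _ ≤ Ch * r ^ M * 2 := by
            apply mul_le_mul_of_nonneg_left hinv (by positivity)
        _ ≤ (2 * Ch) * Real.exp (-(β / τp) * max t 0) := by
            have h3 : Ch * r ^ M ≤ Ch * Real.exp (-(β / τp) * max t 0) :=
              mul_le_mul_of_nonneg_left hrM hCh0.le
            nlinarith
    have hpos : 0 < kappa R F T x t := by
      obtain ⟨y, hy⟩ := exists_preim hsurj hx ⌈max t 0 / τm⌉₊
      set m₁ := ⌈max t 0 / τm⌉₊ with hm₁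
      have hyX : y ∈ OneSubshift R := hy.1
      have hTge : (m₁:ℝ) * τm ≤ birkhoffN T m₁ y :=
        birkhoff_ge (fun z hz => (hT z hz).1) hyX m₁
      have ht : t ≤ birkhoffN T m₁ y := by
        have h1 : max t 0 / τm ≤ (m₁:ℝ) := Nat.le_ceil _
        rw [div_le_iff₀ hτm] at h1
        exact le_trans (le_max_left t 0) (h1.trans hTge)
      have hterm : 0 < renewalTerm F T t m₁ y := by
        unfold renewalTerm
        rw [if_pos ht, mul_one]
        exact Real.exp_pos _
      have hle : renewalTerm F T t m₁ y ≤ kappa R F T x t :=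
        Summable.le_tsum hsig ⟨m₁, ⟨y, hy⟩⟩ (fun q _ => hterm_nonneg q.1 q.2.val)
      exact lt_of_lt_of_le hterm hle
    exact ⟨hsig, hpos, hbound⟩
  refine ⟨hω, fun x hx t => ⟨(key x hx t).1, (key x hx t).2.1⟩,
    ⟨2 * Ch, by positivity, fun x hx t => (key x hx t).2.2⟩⟩
end

section
/- For every constant C > 0 there exist E_0 > 0 and C' > 0 with the following property. For E > E_0 put δ_T := C·E^{−3/2}, δ_F := C·E^{−1}, and define perturbed matrices M_E^+(β) with entries exp(−(F̃_E + 2·ln(1+δ_F)) + β·(T̃_E − δ_T)) on composable pairs (0 otherwise) and M_E^-(β) with entries exp(−(F̃_E + 2·ln(1−δ_F)) + β·(T̃_E + δ_T)) on composable pairs (0 otherwise). Then for all E > E_0 the equations 'spectral radius of M_E^±(β) equals 1' have unique solutions β̃_E^±, the equation 'spectral radius of M_E(β) equals 1' has a unique solution β̃_E, and |β̃_E^± − β̃_E| ≤ C'·β̃_E/E, i.e. β̃_E^± = β̃_E·(1 + O(1/E)). -/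
/-! Statement 6: the solutions `β̃_E^±` of the perturbed Perron–Frobenius problems
approximate the solution `β̃_E` of the unperturbed one with relative error `O(1/E)`. -/

open scoped ENNReal

/-- Configuration space `ℝ³`. -/
abbrev E3 := EuclideanSpace ℝ (Fin 3)

/-- The alphabet `A = {(i,j) : i ≠ j}`. -/
abbrev MolAlphabet (n : ℕ) := {p : Fin n × Fin n // p.1 ≠ p.2}

/-- Two symbols `(i,j)` and `(k,l)` are composable iff `j = k`. -/
abbrev Composable {n : ℕ} (k₀ k₁ : MolAlphabet n) : Prop := k₀.1.2 = k₁.1.1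

/-- The spectral radius of a real square matrix (computed over `ℂ`). -/
noncomputable def specRad {A : Type*} [Fintype A] [DecidableEq A]
    (M : Matrix A A ℝ) : ℝ≥0∞ :=
  spectralRadius ℂ (M.map Complex.ofReal)

/-- `f((i,j),(j,l)) = 2 d_{i,j} cos²(α(i,j,l)/2) / (−Z_j)`. -/
noncomputable def molF {n : ℕ} (q : Fin n → E3) (Z : Fin n → ℝ)
    (k₀ k₁ : MolAlphabet n) : ℝ :=
  2 * ‖q k₀.1.1 - q k₀.1.2‖ *
    Real.cos (InnerProductGeometry.angle (q k₀.1.1 - q k₀.1.2)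
      (q k₁.1.2 - q k₀.1.2) / 2) ^ 2 / (-(Z k₀.1.2))

/-- The approximate Poincaré time `T̃_E(k₀,k₁) = d̄/√(2E) − Z_j ln E/(2E)^{3/2}`. -/
noncomputable def molT {n : ℕ} (q : Fin n → E3) (Z : Fin n → ℝ) (E : ℝ)
    (k₀ k₁ : MolAlphabet n) : ℝ :=
  (‖q k₀.1.1 - q k₀.1.2‖ + ‖q k₀.1.2 - q k₁.1.2‖) / 2 / Real.sqrt (2 * E) -
    Z k₀.1.2 * Real.log E / (2 * E) ^ ((3 : ℝ) / 2)

/-- The approximate unstable Jacobian `F̃_E(k₀,k₁) = 2 ln(2E |f(k₀,k₁)| / d_{i,j})`. -/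
noncomputable def molFE {n : ℕ} (q : Fin n → E3) (Z : Fin n → ℝ) (E : ℝ)
    (k₀ k₁ : MolAlphabet n) : ℝ :=
  2 * Real.log (2 * E * |molF q Z k₀ k₁| / ‖q k₀.1.1 - q k₀.1.2‖)

/-- The weighted transfer matrix `M_E(β)`. -/
noncomputable def molM {n : ℕ} (q : Fin n → E3) (Z : Fin n → ℝ) (E β : ℝ) :
    Matrix (MolAlphabet n) (MolAlphabet n) ℝ :=
  Matrix.of fun k₀ k₁ =>
    if Composable k₀ k₁ then
      Real.exp (-(molFE q Z E k₀ k₁) + β * molT q Z E k₀ k₁)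
    else 0

/-- The perturbed transfer matrix `M_E^+(β)`, with `δ_T = C E^{-3/2}`, `δ_F = C E^{-1}`:
entries `exp(−(F̃_E + 2 ln(1+δ_F)) + β (T̃_E − δ_T))` on composable pairs. -/
noncomputable def molMp {n : ℕ} (q : Fin n → E3) (Z : Fin n → ℝ) (C E β : ℝ) :
    Matrix (MolAlphabet n) (MolAlphabet n) ℝ :=
  Matrix.of fun k₀ k₁ =>
    if Composable k₀ k₁ then
      Real.exp (-(molFE q Z E k₀ k₁ + 2 * Real.log (1 + C * E ^ (-(1 : ℝ)))) +
        β * (molT q Z E k₀ k₁ - C * E ^ (-(3 : ℝ) / 2)))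
    else 0

/-- The perturbed transfer matrix `M_E^-(β)`:
entries `exp(−(F̃_E + 2 ln(1−δ_F)) + β (T̃_E + δ_T))` on composable pairs. -/
noncomputable def molMm {n : ℕ} (q : Fin n → E3) (Z : Fin n → ℝ) (C E β : ℝ) :
    Matrix (MolAlphabet n) (MolAlphabet n) ℝ :=
  Matrix.of fun k₀ k₁ =>
    if Composable k₀ k₁ then
      Real.exp (-(molFE q Z E k₀ k₁ + 2 * Real.log (1 - C * E ^ (-(1 : ℝ)))) +
        β * (molT q Z E k₀ k₁ + C * E ^ (-(3 : ℝ) / 2)))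
    else 0


open scoped NNReal
open Filter Topology

namespace SpecTool
set_option linter.unusedSectionVars false

variable {ι : Type*} [Fintype ι] [DecidableEq ι] [Nonempty ι]

attribute [local instance] Matrix.linftyOpNormedRing Matrix.linftyOpNormedAlgebra

noncomputable instance : CompleteSpace (Matrix ι ι ℂ) := FiniteDimensional.complete ℂ _

/-- max row sum of nnnorms -/
noncomputable def rsum (M : Matrix ι ι ℝ) : ℝ≥0 :=
  Finset.univ.sup fun i => ∑ j, ‖M i j‖₊

lemma nnnorm_map_eq (M : Matrix ι ι ℝ) : ‖M.map Complex.ofReal‖₊ = rsum M := by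
  rw [Matrix.linfty_opNNNorm_def, rsum]
  congr 1; funext i; congr 1; funext j
  simp [Matrix.map_apply]

lemma map_pow_eq (M : Matrix ι ι ℝ) (k : ℕ) :
    (M.map Complex.ofReal) ^ k = (M ^ k).map Complex.ofReal := by
  change (Complex.ofRealHom.mapMatrix M) ^ k = Complex.ofRealHom.mapMatrix (M ^ k)
  rw [map_pow]

lemma specRad_tendsto (M : Matrix ι ι ℝ) :
    Tendsto (fun k : ℕ => ((rsum (M ^ k) : ℝ≥0∞)) ^ (1 / (k : ℝ))) atTop (𝓝 (specRad M)) := by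
  have h := spectrum.pow_nnnorm_pow_one_div_tendsto_nhds_spectralRadius (M.map Complex.ofReal)
  refine h.congr fun k => ?_
  rw [map_pow_eq, nnnorm_map_eq]

lemma specRad_le_rsum (M : Matrix ι ι ℝ) : specRad M ≤ (rsum M : ℝ≥0∞) := by
  rw [← nnnorm_map_eq]
  exact spectrum.spectralRadius_le_nnnorm (𝕜 := ℂ) _

lemma specRad_ne_top (M : Matrix ι ι ℝ) : specRad M ≠ ⊤ :=
  ne_top_of_le_ne_top ENNReal.coe_ne_top (specRad_le_rsum M)


/-- entrywise nonneg is preserved by powers -/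
lemma pow_nonneg {M : Matrix ι ι ℝ} (hM : ∀ i j, 0 ≤ M i j) (k : ℕ) :
    ∀ i j, 0 ≤ (M ^ k) i j := by
  induction k with
  | zero =>
      intro i j
      rw [pow_zero]
      by_cases h : i = j <;> simp [Matrix.one_apply, h]
  | succ k ih =>
      intro i j
      rw [pow_succ, Matrix.mul_apply]
      exact Finset.sum_nonneg fun c _ => mul_nonneg (ih i c) (hM c j)

lemma pow_mono {M N : Matrix ι ι ℝ} (hM : ∀ i j, 0 ≤ M i j)
    (h : ∀ i j, M i j ≤ N i j) (k : ℕ) : ∀ i j, (M ^ k) i j ≤ (N ^ k) i j := by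
  have hN : ∀ i j, 0 ≤ N i j := fun i j => (hM i j).trans (h i j)
  induction k with
  | zero => intro i j; rw [pow_zero, pow_zero]
  | succ k ih =>
      intro i j
      rw [pow_succ, pow_succ, Matrix.mul_apply, Matrix.mul_apply]
      refine Finset.sum_le_sum fun c _ => ?_
      exact mul_le_mul (ih i c) (h c j) (hM c j) ((pow_nonneg hN k) i c)

lemma rsum_mono {M N : Matrix ι ι ℝ} (hM : ∀ i j, 0 ≤ M i j)
    (h : ∀ i j, M i j ≤ N i j) : rsum M ≤ rsum N := by
  refine Finset.sup_mono_fun fun i _ => Finset.sum_le_sum fun j _ => ?_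
  have h1 : ‖M i j‖ ≤ ‖N i j‖ := by
    rw [Real.norm_eq_abs, Real.norm_eq_abs, abs_of_nonneg (hM i j),
      abs_of_nonneg ((hM i j).trans (h i j))]
    exact h i j
  exact h1

/-- monotonicity of the spectral radius for entrywise-ordered nonneg matrices -/
lemma specRad_mono {M N : Matrix ι ι ℝ} (hM : ∀ i j, 0 ≤ M i j)
    (h : ∀ i j, M i j ≤ N i j) : specRad M ≤ specRad N := by
  refine le_of_tendsto_of_tendsto' (specRad_tendsto M) (specRad_tendsto N) fun k => ?_
  have h1 : rsum (M ^ k) ≤ rsum (N ^ k) := rsum_mono (pow_nonneg hM k) (pow_mono hM h k)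
  exact ENNReal.rpow_le_rpow (ENNReal.coe_le_coe.mpr h1) (by positivity)

lemma rsum_smul (c : ℝ) (M : Matrix ι ι ℝ) : rsum (c • M) = ‖c‖₊ * rsum M := by
  rw [rsum, rsum, NNReal.mul_finset_sup]
  congr 1; funext i
  rw [Finset.mul_sum]
  congr 1; funext j
  rw [Matrix.smul_apply, smul_eq_mul, nnnorm_mul]

/-- scaling of the spectral radius -/
lemma specRad_smul (c : ℝ) (M : Matrix ι ι ℝ) :
    specRad (c • M) = (‖c‖₊ : ℝ≥0∞) * specRad M := by
  have h1 := specRad_tendsto (c • M)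
  have h2 : Tendsto (fun k : ℕ => (‖c‖₊ : ℝ≥0∞) *
      ((rsum (M ^ k) : ℝ≥0∞)) ^ (1 / (k : ℝ))) atTop (𝓝 ((‖c‖₊ : ℝ≥0∞) * specRad M)) :=
    ENNReal.Tendsto.const_mul (specRad_tendsto M) (Or.inr ENNReal.coe_ne_top)
  refine tendsto_nhds_unique (h1.congr' ?_) h2
  filter_upwards [eventually_ge_atTop 1] with k hk
  have hk' : (k : ℝ) ≠ 0 := Nat.cast_ne_zero.mpr (by omega)
  rw [smul_pow, rsum_smul, ENNReal.coe_mul,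
    ENNReal.mul_rpow_of_nonneg _ _ (by positivity), nnnorm_pow, ENNReal.coe_pow,
    ← ENNReal.rpow_natCast (‖c‖₊ : ℝ≥0∞) k, ← ENNReal.rpow_mul,
    mul_one_div, div_self hk', ENNReal.rpow_one]

/-- lower bound via a 2-cycle -/
lemma specRad_sq_lower {M : Matrix ι ι ℝ} (hM : ∀ i j, 0 ≤ M i j) (a b : ι) :
    ((‖M a b‖₊ * ‖M b a‖₊ : ℝ≥0) : ℝ≥0∞) ^ ((1 : ℝ)/2) ≤ specRad M := by
  set c : ℝ≥0 := ‖M a b‖₊ * ‖M b a‖₊ with hc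
  have key : ∀ k : ℕ, (c : ℝ) ^ k ≤ (M ^ (2 * k)) a a := by
    intro k
    induction k with
    | zero => simp [pow_zero, Matrix.one_apply]
    | succ k ih =>
        have h2 : (M ^ (2 * (k + 1))) a a = ∑ j, (M ^ 2) a j * (M ^ (2 * k)) j a := by
          rw [show 2 * (k + 1) = 2 + 2 * k by ring, pow_add, Matrix.mul_apply]
        have h3 : (M ^ 2) a a ≥ (c : ℝ) := by
          rw [pow_two, Matrix.mul_apply]
          have : (c : ℝ) = M a b * M b a := by
            rw [hc, NNReal.coe_mul, coe_nnnorm, coe_nnnorm, Real.norm_eq_abs,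
              Real.norm_eq_abs, abs_of_nonneg (hM a b), abs_of_nonneg (hM b a)]
          rw [this]
          exact Finset.single_le_sum (f := fun j => M a j * M j a)
            (fun j _ => mul_nonneg (hM a j) (hM j a)) (Finset.mem_univ b)
        calc (c : ℝ) ^ (k + 1) = (c : ℝ) * (c : ℝ) ^ k := by ring
          _ ≤ (M ^ 2) a a * (M ^ (2 * k)) a a := by
              refine mul_le_mul h3 ih (by positivity) ?_
              exact (pow_nonneg hM 2) a a
          _ ≤ ∑ j, (M ^ 2) a j * (M ^ (2 * k)) j a := by
              refine Finset.single_le_sum (f := fun j => (M ^ 2) a j * (M ^ (2 * k)) j a)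
                (fun j _ => mul_nonneg ((pow_nonneg hM 2) a j) ((pow_nonneg hM (2*k)) j a))
                (Finset.mem_univ a)
          _ = (M ^ (2 * (k + 1))) a a := h2.symm
  have hrs : ∀ k : ℕ, c ^ k ≤ rsum (M ^ (2 * k)) := by
    intro k
    have h1 : ‖(M ^ (2 * k)) a a‖₊ ≤ ∑ j, ‖(M ^ (2 * k)) a j‖₊ :=
      Finset.single_le_sum (f := fun j => ‖(M ^ (2 * k)) a j‖₊) (fun j _ => zero_le)
        (Finset.mem_univ a)
    have h2 : c ^ k ≤ ‖(M ^ (2 * k)) a a‖₊ := by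
      have := key k
      have hnn : 0 ≤ (M ^ (2 * k)) a a := (pow_nonneg hM (2 * k)) a a
      rw [← NNReal.coe_le_coe, coe_nnnorm, Real.norm_eq_abs, abs_of_nonneg hnn,
        NNReal.coe_pow]
      exact key k
    exact le_trans (h2.trans h1) (Finset.le_sup (f := fun i => ∑ j, ‖(M ^ (2*k)) i j‖₊)
      (Finset.mem_univ a))
  have hsub : Tendsto (fun k : ℕ => ((rsum (M ^ (2 * k)) : ℝ≥0∞)) ^ (1 / ((2 * k : ℕ) : ℝ)))
      atTop (𝓝 (specRad M)) := by
    refine (specRad_tendsto M).comp ?_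
    exact tendsto_atTop_atTop.mpr fun b => ⟨b, fun a ha => by omega⟩
  refine ge_of_tendsto hsub ?_
  filter_upwards [eventually_ge_atTop 1] with k hk
  have hk0 : (k : ℝ) ≠ 0 := Nat.cast_ne_zero.mpr (by omega)
  calc ((c : ℝ≥0∞)) ^ ((1:ℝ)/2)
      = ((c : ℝ≥0∞) ^ (k : ℕ)) ^ (1 / ((2 * k : ℕ) : ℝ)) := by
        rw [← ENNReal.rpow_natCast (c : ℝ≥0∞) k, ← ENNReal.rpow_mul]
        congr 1
        push_cast
        field_simp
    _ ≤ ((rsum (M ^ (2 * k)) : ℝ≥0∞)) ^ (1 / ((2 * k : ℕ) : ℝ)) := by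
        refine ENNReal.rpow_le_rpow ?_ (by positivity)
        rw [← ENNReal.coe_pow]
        exact ENNReal.coe_le_coe.mpr (hrs k)

end SpecTool

section Abstract

open Filter Topology

variable {ι : Type*} [Fintype ι] [DecidableEq ι] [Nonempty ι]

/-- abstract transfer matrix -/
noncomputable def taM (W : ι → ι → Prop) [DecidableRel W] (F T : ι → ι → ℝ) (β : ℝ) :
    Matrix ι ι ℝ :=
  Matrix.of fun i j => if W i j then Real.exp (-(F i j) + β * T i j) else 0

variable (W : ι → ι → Prop) [DecidableRel W] (F T : ι → ι → ℝ)

lemma taM_nonneg (β : ℝ) : ∀ i j, 0 ≤ taM W F T β i j := by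
  intro i j
  simp only [taM, Matrix.of_apply]
  split
  · exact (Real.exp_pos _).le
  · exact le_rfl

/-- Perron value -/
noncomputable def taPhi (β : ℝ) : ℝ := (specRad (taM W F T β)).toReal

lemma taSpec_eq (β : ℝ) : specRad (taM W F T β) = ENNReal.ofReal (taPhi W F T β) := by
  rw [taPhi, ENNReal.ofReal_toReal (SpecTool.specRad_ne_top _)]

lemma taPhi_nonneg (β : ℝ) : 0 ≤ taPhi W F T β := ENNReal.toReal_nonneg

lemma taPhi_le (β : ℝ) (c : ℝ) (hc0 : 0 ≤ c)
    (hc : ∀ i j, W i j → Real.exp (-(F i j) + β * T i j) ≤ c) :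
    taPhi W F T β ≤ (Fintype.card ι : ℝ) * c := by
  have h0 : SpecTool.rsum (taM W F T β) ≤ (Fintype.card ι : ℝ≥0) * c.toNNReal := by
    rw [SpecTool.rsum]
    refine Finset.sup_le fun i _ => ?_
    calc ∑ j, ‖taM W F T β i j‖₊ ≤ ∑ _j : ι, c.toNNReal := by
          refine Finset.sum_le_sum fun j _ => ?_
          rw [← Real.toNNReal_eq_nnnorm_of_nonneg (taM_nonneg W F T β i j)]
          refine Real.toNNReal_mono ?_
          simp only [taM, Matrix.of_apply]
          split
          · exact hc i j (by assumption)
          · exact hc0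
      _ = (Fintype.card ι : ℝ≥0) * c.toNNReal := by
          rw [Finset.sum_const, Finset.card_univ, nsmul_eq_mul]
  have h1 : specRad (taM W F T β) ≤ (((Fintype.card ι : ℝ≥0) * c.toNNReal : ℝ≥0) : ℝ≥0∞) :=
    (SpecTool.specRad_le_rsum _).trans (ENNReal.coe_le_coe.mpr h0)
  have h2 := ENNReal.toReal_mono ENNReal.coe_ne_top h1
  rw [taPhi]
  refine h2.trans_eq ?_
  push_cast
  simp [ENNReal.toReal_mul, Real.coe_toNNReal c hc0]

lemma taPhi_lower (a b : ι) (ha : W a b) (hb : W b a) (β : ℝ) :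
    Real.exp ((-(F a b) - F b a + β * (T a b + T b a)) / 2) ≤ taPhi W F T β := by
  have h := SpecTool.specRad_sq_lower (taM_nonneg W F T β) a b
  have hab : taM W F T β a b = Real.exp (-(F a b) + β * T a b) := by
    simp [taM, ha]
  have hba : taM W F T β b a = Real.exp (-(F b a) + β * T b a) := by
    simp [taM, hb]
  have h2 : ((‖taM W F T β a b‖₊ * ‖taM W F T β b a‖₊ : ℝ≥0) : ℝ≥0∞)
      = ENNReal.ofReal (Real.exp ((-(F a b) + β * T a b) + (-(F b a) + β * T b a))) := by
    rw [ENNReal.coe_mul, hab, hba, ← enorm_eq_nnnorm, Real.enorm_eq_ofReal (Real.exp_pos _).le,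
      ← enorm_eq_nnnorm, Real.enorm_eq_ofReal (Real.exp_pos _).le, ← ENNReal.ofReal_mul (Real.exp_pos _).le,
      ← Real.exp_add]
  rw [h2] at h
  have h3 : (ENNReal.ofReal (Real.exp ((-(F a b) + β * T a b) + (-(F b a) + β * T b a)))) ^ ((1:ℝ)/2)
      = ENNReal.ofReal (Real.exp ((-(F a b) - F b a + β * (T a b + T b a)) / 2)) := by
    rw [ENNReal.ofReal_rpow_of_pos (Real.exp_pos _)]
    congr 1
    rw [← Real.exp_mul]
    congr 1
    ring
  rw [h3, taSpec_eq] at h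
  exact (ENNReal.ofReal_le_ofReal_iff (taPhi_nonneg W F T β)).mp h

lemma taPhi_pos (a b : ι) (ha : W a b) (hb : W b a) (β : ℝ) : 0 < taPhi W F T β :=
  lt_of_lt_of_le (Real.exp_pos _) (taPhi_lower W F T a b ha hb β)

lemma taPhi_sandwich (tmin tmax : ℝ) (htmin : ∀ i j, W i j → tmin ≤ T i j)
    (htmax : ∀ i j, W i j → T i j ≤ tmax) (β h : ℝ) (hh : 0 ≤ h) :
    taPhi W F T β * Real.exp (h * tmin) ≤ taPhi W F T (β + h) ∧
      taPhi W F T (β + h) ≤ taPhi W F T β * Real.exp (h * tmax) := by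
  have hnn := taM_nonneg W F T β
  constructor
  · have hsm : ∀ i j, 0 ≤ (Real.exp (h * tmin) • taM W F T β) i j := fun i j => by
      rw [Matrix.smul_apply, smul_eq_mul]
      exact mul_nonneg (Real.exp_pos _).le (hnn i j)
    have hmat : ∀ i j, (Real.exp (h * tmin) • taM W F T β) i j ≤ taM W F T (β + h) i j := by
      intro i j
      rw [Matrix.smul_apply, smul_eq_mul]
      simp only [taM, Matrix.of_apply]
      split
      · rename_i hij
        rw [← Real.exp_add]
        refine Real.exp_le_exp.mpr ?_
        have h1 := htmin i j hij
        nlinarith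
      · simp
    have h1 := SpecTool.specRad_mono hsm hmat
    rw [SpecTool.specRad_smul, taSpec_eq, taSpec_eq,
      ← enorm_eq_nnnorm, Real.enorm_eq_ofReal (Real.exp_pos _).le,
      ← ENNReal.ofReal_mul (Real.exp_pos _).le] at h1
    have h2 := (ENNReal.ofReal_le_ofReal_iff (taPhi_nonneg W F T (β + h))).mp h1
    linarith [h2]
  · have hsm : ∀ i j, 0 ≤ taM W F T (β + h) i j := taM_nonneg W F T (β + h)
    have hmat : ∀ i j, taM W F T (β + h) i j ≤ (Real.exp (h * tmax) • taM W F T β) i j := by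
      intro i j
      rw [Matrix.smul_apply, smul_eq_mul]
      simp only [taM, Matrix.of_apply]
      split
      · rename_i hij
        rw [← Real.exp_add]
        refine Real.exp_le_exp.mpr ?_
        have h1 := htmax i j hij
        nlinarith
      · simp
    have h1 := SpecTool.specRad_mono hsm hmat
    rw [SpecTool.specRad_smul, taSpec_eq, taSpec_eq,
      ← enorm_eq_nnnorm, Real.enorm_eq_ofReal (Real.exp_pos _).le,
      ← ENNReal.ofReal_mul (Real.exp_pos _).le] at h1
    have h2 := (ENNReal.ofReal_le_ofReal_iff
      (mul_nonneg (Real.exp_pos _).le (taPhi_nonneg W F T β))).mp h1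
    linarith [h2]

/-- log of the Perron value -/
noncomputable def taPsi (β : ℝ) : ℝ := Real.log (taPhi W F T β)

lemma taPsi_diff (a b : ι) (ha : W a b) (hb : W b a) (tmin tmax : ℝ)
    (htmin : ∀ i j, W i j → tmin ≤ T i j) (htmax : ∀ i j, W i j → T i j ≤ tmax)
    (β₁ β₂ : ℝ) (h : β₁ ≤ β₂) :
    tmin * (β₂ - β₁) ≤ taPsi W F T β₂ - taPsi W F T β₁ ∧
      taPsi W F T β₂ - taPsi W F T β₁ ≤ tmax * (β₂ - β₁) := by
  obtain ⟨h1, h2⟩ := taPhi_sandwich W F T tmin tmax htmin htmax β₁ (β₂ - β₁) (by linarith)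
  have he : β₁ + (β₂ - β₁) = β₂ := by ring
  rw [he] at h1 h2
  have hp1 := taPhi_pos W F T a b ha hb β₁
  have hp2 := taPhi_pos W F T a b ha hb β₂
  constructor
  · have h3 := (Real.log_le_log_iff (by positivity) hp2).mpr h1
    rw [Real.log_mul (ne_of_gt hp1) (Real.exp_ne_zero _), Real.log_exp] at h3
    simp only [taPsi]
    linarith
  · have h3 := (Real.log_le_log_iff hp2 (by positivity)).mpr h2
    rw [Real.log_mul (ne_of_gt hp1) (Real.exp_ne_zero _), Real.log_exp] at h3
    simp only [taPsi]
    linarith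

lemma taPsi_lower (a b : ι) (ha : W a b) (hb : W b a) (β : ℝ) :
    (-(F a b) - F b a) / 2 + β * ((T a b + T b a) / 2) ≤ taPsi W F T β := by
  have h1 := taPhi_lower W F T a b ha hb β
  have h2 := (Real.log_le_log_iff (Real.exp_pos _) (taPhi_pos W F T a b ha hb β)).mpr h1
  rw [Real.log_exp] at h2
  refine le_trans (le_of_eq ?_) h2
  ring

lemma taPsi_zero_le (a b : ι) (ha : W a b) (hb : W b a) (Fm : ℝ)
    (hFm : ∀ i j, W i j → Fm ≤ F i j) :
    taPsi W F T 0 ≤ Real.log (Fintype.card ι : ℝ) - Fm := by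
  have hφ := taPhi_pos W F T a b ha hb 0
  have h1 : taPhi W F T 0 ≤ (Fintype.card ι : ℝ) * Real.exp (-Fm) := by
    refine taPhi_le W F T 0 (Real.exp (-Fm)) (Real.exp_pos _).le fun i j hij => ?_
    rw [Real.exp_le_exp]
    have := hFm i j hij
    nlinarith
  have hcard : (0 : ℝ) < (Fintype.card ι : ℝ) := by
    have := Fintype.card_pos (α := ι)
    positivity
  have h2 := (Real.log_le_log_iff hφ (by positivity)).mpr h1
  rw [Real.log_mul (ne_of_gt hcard) (Real.exp_ne_zero _), Real.log_exp] at h2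
  simp only [taPsi]
  linarith

lemma taPsi_mono (a b : ι) (ha : W a b) (hb : W b a) (tmin tmax : ℝ)
    (htmin : ∀ i j, W i j → tmin ≤ T i j) (htmax : ∀ i j, W i j → T i j ≤ tmax)
    {β₁ β₂ : ℝ} (h : β₁ ≤ β₂) (htmin0 : 0 ≤ tmin) : taPsi W F T β₁ ≤ taPsi W F T β₂ := by
  have := (taPsi_diff W F T a b ha hb tmin tmax htmin htmax β₁ β₂ h).1
  nlinarith

lemma taPsi_cont (a b : ι) (ha : W a b) (hb : W b a) (tmin tmax : ℝ) (htmin0 : 0 ≤ tmin)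
    (htmin : ∀ i j, W i j → tmin ≤ T i j) (htmax : ∀ i j, W i j → T i j ≤ tmax) :
    Continuous (taPsi W F T) := by
  have htmax0 : 0 ≤ tmax := le_trans htmin0 (le_trans (htmin a b ha) (htmax a b ha))
  refine (LipschitzWith.of_dist_le_mul (K := tmax.toNNReal) ?_).continuous
  intro x y
  have key : ∀ u v : ℝ, u ≤ v → dist (taPsi W F T u) (taPsi W F T v) ≤ tmax.toNNReal * dist u v := by
    intro u v huv
    obtain ⟨hl, hr⟩ := taPsi_diff W F T a b ha hb tmin tmax htmin htmax u v huv
    rw [Real.dist_eq, Real.dist_eq, Real.coe_toNNReal _ htmax0]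
    rw [abs_of_nonpos (by nlinarith), abs_of_nonpos (by linarith)]
    nlinarith
  rcases le_total x y with h | h
  · exact key x y h
  · rw [dist_comm, dist_comm x y]; exact key y x h

lemma taSolve (a b : ι) (ha : W a b) (hb : W b a) (tmin tmax : ℝ) (htmin0 : 0 < tmin)
    (htmin : ∀ i j, W i j → tmin ≤ T i j) (htmax : ∀ i j, W i j → T i j ≤ tmax)
    (r s : ℝ) (hs : s < tmin) :
    ∃! β : ℝ, taPsi W F T β = r + s * β := by
  set χ : ℝ → ℝ := fun β => taPsi W F T β - s * β with hχ
  have hχcont : Continuous χ := by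
    exact (taPsi_cont W F T a b ha hb tmin tmax htmin0.le htmin htmax).sub
      (continuous_const.mul continuous_id)
  have hstrict : ∀ β₁ β₂ : ℝ, β₁ < β₂ → χ β₁ < χ β₂ := by
    intro β₁ β₂ hlt
    have := (taPsi_diff W F T a b ha hb tmin tmax htmin htmax β₁ β₂ hlt.le).1
    simp only [hχ]
    nlinarith
  have hmono : ∀ β₁ β₂ : ℝ, β₁ ≤ β₂ → χ β₁ ≤ χ β₂ := by
    intro β₁ β₂ hle
    rcases eq_or_lt_of_le hle with rfl | hlt
    · exact le_rfl
    · exact (hstrict _ _ hlt).le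
  set tb : ℝ := (T a b + T b a) / 2 with htb
  have htbmin : tmin ≤ tb := by
    have h1 := htmin a b ha
    have h2 := htmin b a hb
    rw [htb]; linarith
  have htbs : 0 < tb - s := by linarith
  set Fb : ℝ := (F a b + F b a) / 2 with hFb
  have hψlow : ∀ β : ℝ, -Fb + β * tb ≤ taPsi W F T β := by
    intro β
    have := taPsi_lower W F T a b ha hb β
    rw [hFb, htb]
    refine le_trans (le_of_eq ?_) this
    ring
  set βr : ℝ := max ((Fb + r) / (tb - s)) 0 with hβr
  have hr : r ≤ χ βr := by
    have h1 : -Fb + βr * (tb - s) ≤ χ βr := by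
      have := hψlow βr
      simp only [hχ]
      nlinarith
    rcases le_or_gt 0 ((Fb + r) / (tb - s)) with hq2 | hq2
    · have h2 : βr * (tb - s) = Fb + r := by
        rw [hβr, max_eq_left hq2, div_mul_cancel₀ _ (ne_of_gt htbs)]
      nlinarith
    · have hneg : Fb + r < 0 := by
        by_contra hcon
        push_neg at hcon
        exact absurd (div_nonneg hcon htbs.le) (not_le.mpr hq2)
      have hβr0 : βr * (tb - s) = 0 := by rw [hβr, max_eq_right hq2.le, zero_mul]
      nlinarith
  set q : ℝ := (r - χ 0 - 1) / (tmin - s) with hq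
  set βl : ℝ := min q 0 with hβl
  have hβlr : βl ≤ βr := le_trans (min_le_right _ _) (le_max_right _ _)
  have hl : χ βl ≤ r := by
    rcases le_or_gt q 0 with hq0 | hq0
    · have hβle : βl = q := min_eq_left hq0
      have hd := (taPsi_diff W F T a b ha hb tmin tmax htmin htmax q 0 hq0).1
      have hχd : (tmin - s) * (0 - q) ≤ χ 0 - χ q := by
        simp only [hχ]
        nlinarith
      have hqe : q * (tmin - s) = r - χ 0 - 1 := by
        rw [hq, div_mul_cancel₀]
        linarith
      rw [hβle]
      nlinarith
    · have hβle : βl = 0 := min_eq_right hq0.le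
      have : 0 < (r - χ 0 - 1) / (tmin - s) := hq0
      have hpos : 0 < r - χ 0 - 1 := by
        by_contra hcon
        push_neg at hcon
        have : (r - χ 0 - 1) / (tmin - s) ≤ 0 := div_nonpos_of_nonpos_of_nonneg hcon (by linarith)
        linarith
      rw [hβle]
      linarith
  have hivt : ∃ β ∈ Set.Icc βl βr, χ β = r := by
    have := intermediate_value_Icc hβlr hχcont.continuousOn
    have hmem : r ∈ Set.Icc (χ βl) (χ βr) := ⟨hl, hr⟩
    obtain ⟨β, hβmem, hβeq⟩ := this hmem
    exact ⟨β, hβmem, hβeq⟩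
  obtain ⟨β, _, hβeq⟩ := hivt
  refine ⟨β, by simp only [hχ] at hβeq; linarith, ?_⟩
  intro y hy
  have hyχ : χ y = r := by simp only [hχ]; linarith
  by_contra hne
  rcases lt_or_gt_of_ne hne with hlt | hlt
  · exact absurd (hyχ.trans hβeq.symm) (ne_of_lt (hstrict _ _ hlt))
  · exact absurd (hβeq.trans hyχ.symm) (ne_of_lt (hstrict _ _ hlt))

lemma taSpec_smul_eq_one_iff (a b : ι) (ha : W a b) (hb : W b a) (u β : ℝ) :
    specRad (Real.exp u • taM W F T β) = 1 ↔ taPsi W F T β = -u := by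
  have hφ := taPhi_pos W F T a b ha hb β
  rw [SpecTool.specRad_smul, taSpec_eq, ← enorm_eq_nnnorm, Real.enorm_eq_ofReal (Real.exp_pos _).le,
    ← ENNReal.ofReal_mul (Real.exp_pos _).le, ENNReal.ofReal_eq_one]
  constructor
  · intro h
    have h2 : taPhi W F T β = Real.exp (-u) := by
      rw [Real.exp_neg]
      field_simp
      linarith
  
    rw [taPsi, h2, Real.log_exp]
  · intro h
    have h2 : taPhi W F T β = Real.exp (-u) := by
      rw [← h, taPsi, Real.exp_log hφ]
    rw [h2, ← Real.exp_add]
    simp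

lemma taSpec_eq_one_iff (a b : ι) (ha : W a b) (hb : W b a) (β : ℝ) :
    specRad (taM W F T β) = 1 ↔ taPsi W F T β = 0 := by
  have := taSpec_smul_eq_one_iff W F T a b ha hb 0 β
  rw [Real.exp_zero, one_smul, neg_zero] at this
  exact this

end Abstract

set_option maxHeartbeats 4000000 in
theorem stmt6 (n : ℕ) (hn : 2 ≤ n) (q : Fin n → E3) (Z : Fin n → ℝ)
    (hq : Function.Injective q)
    (hgen : ∀ i j k : Fin n, i ≠ j → j ≠ k → i ≠ k →
      ¬ Collinear ℝ ({q i, q j, q k} : Set E3))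
    (hZ : ∀ i, Z i ≠ 0) :
    ∀ C > (0 : ℝ), ∃ E₀ > (0 : ℝ), ∃ C' > (0 : ℝ), ∃ βt βp βm : ℝ → ℝ,
      ∀ E > E₀,
        (specRad (molM q Z E (βt E)) = 1 ∧
          ∀ β : ℝ, specRad (molM q Z E β) = 1 → β = βt E) ∧
        (specRad (molMp q Z C E (βp E)) = 1 ∧
          ∀ β : ℝ, specRad (molMp q Z C E β) = 1 → β = βp E) ∧
        (specRad (molMm q Z C E (βm E)) = 1 ∧
          ∀ β : ℝ, specRad (molMm q Z C E β) = 1 → β = βm E) ∧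
        |βp E - βt E| ≤ C' * βt E / E ∧
        |βm E - βt E| ≤ C' * βt E / E := by
  intro C hC
  haveI : NeZero n := ⟨by omega⟩
  have h01 : ((0 : Fin n)) ≠ 1 := by
    simp only [Fin.ne_iff_vne, Fin.val_zero, Fin.val_one']
    rw [Nat.mod_eq_of_lt (by omega)]
    norm_num
  set a : MolAlphabet n := ⟨((0 : Fin n), 1), h01⟩ with hadef
  set b : MolAlphabet n := ⟨((1 : Fin n), 0), h01.symm⟩ with hbdef
  haveI : Nonempty (MolAlphabet n) := ⟨a⟩
  set W : MolAlphabet n → MolAlphabet n → Prop := fun k₀ k₁ => Composable k₀ k₁ with hWdef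
  have hab : W a b := rfl
  have hba : W b a := rfl
  have huniv : (Finset.univ : Finset (MolAlphabet n)).Nonempty := ⟨a, Finset.mem_univ a⟩
  set dOf : MolAlphabet n → ℝ := fun k => ‖q k.1.1 - q k.1.2‖ with hdOf
  set dmin := Finset.univ.inf' huniv dOf with hdmindef
  set dmax := Finset.univ.sup' huniv dOf with hdmaxdef
  have hdpos : ∀ k : MolAlphabet n, 0 < dOf k := by
    intro k
    rw [hdOf]
    simp only
    rw [norm_pos_iff, sub_ne_zero]
    exact fun h => k.2 (hq h)
  have hdminpos : 0 < dmin := by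
    rw [hdmindef, Finset.lt_inf'_iff]
    exact fun k _ => hdpos k
  have hdle : ∀ i j : Fin n, (hij : i ≠ j) → dmin ≤ ‖q i - q j‖ ∧ ‖q i - q j‖ ≤ dmax := by
    intro i j hij
    have h1 : dmin ≤ dOf ⟨(i, j), hij⟩ := Finset.inf'_le _ (Finset.mem_univ _)
    have h2 : dOf ⟨(i, j), hij⟩ ≤ dmax := Finset.le_sup' _ (Finset.mem_univ _)
    exact ⟨h1, h2⟩
  have hdminmax : dmin ≤ dmax := le_trans (hdle 0 1 h01).1 (hdle 0 1 h01).2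
  have hdmaxpos : 0 < dmax := lt_of_lt_of_le hdminpos hdminmax
  have hfinne : (Finset.univ : Finset (Fin n)).Nonempty := ⟨0, Finset.mem_univ _⟩
  set Zmax := Finset.univ.sup' hfinne (fun i => |Z i|) with hZmaxdef
  have hZle : ∀ i, |Z i| ≤ Zmax := by
    intro i
    rw [hZmaxdef]
    exact Finset.le_sup' (fun i => |Z i|) (Finset.mem_univ i)
  have hZmax0 : 0 ≤ Zmax := le_trans (abs_nonneg _) (hZle 0)
  -- molF is nonzero on composable pairs
  have hfne : ∀ k₀ k₁ : MolAlphabet n, W k₀ k₁ → molF q Z k₀ k₁ ≠ 0 := by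
    rintro ⟨⟨i, j⟩, hij⟩ ⟨⟨j', l⟩, hjl⟩ hw
    have hjj : j = j' := hw
    subst hjj
    have hx : q i - q j ≠ 0 := sub_ne_zero.mpr (fun h => hij (hq h))
    have hangle : InnerProductGeometry.angle (q i - q j) (q l - q j) ≠ Real.pi := by
      intro hpi
      rw [InnerProductGeometry.angle_eq_pi_iff] at hpi
      obtain ⟨hx0, r, hr, hy⟩ := hpi
      by_cases hli : l = i
      · subst hli
        have h1 : (r - 1) • (q l - q j) = 0 := by
          rw [sub_smul, one_smul, ← hy, sub_self]
        rcases smul_eq_zero.mp h1 with h2 | h2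
        · exact absurd (by linarith [sub_eq_zero.mp (by linarith [h2] : r - 1 = 0)] : (1:ℝ) ≤ 0) (by norm_num)
        · exact hx0 h2
      · have hcoll : Collinear ℝ ({q i, q j, q l} : Set E3) := by
          rw [collinear_iff_of_mem (Set.mem_insert_of_mem _ (Set.mem_insert _ _))]
          refine ⟨q i - q j, ?_⟩
          rintro p (rfl | rfl | rfl)
          · exact ⟨1, by rw [one_smul]; exact (sub_add_cancel _ _).symm⟩
          · exact ⟨0, by rw [zero_smul]; exact (zero_add _).symm⟩
          · exact ⟨r, by rw [← hy]; exact (sub_add_cancel _ _).symm⟩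
        exact (hgen i j l hij hjl (fun h => hli h.symm)) hcoll
    have hcos : Real.cos (InnerProductGeometry.angle (q i - q j) (q l - q j) / 2) ≠ 0 := by
      have h0 := InnerProductGeometry.angle_nonneg (q i - q j) (q l - q j)
      have h1 := InnerProductGeometry.angle_le_pi (q i - q j) (q l - q j)
      have hlt : InnerProductGeometry.angle (q i - q j) (q l - q j) < Real.pi :=
        lt_of_le_of_ne h1 hangle
      have hp := Real.pi_pos
      exact ne_of_gt (Real.cos_pos_of_mem_Ioo ⟨by nlinarith, by nlinarith⟩)
    simp only [molF]
    apply div_ne_zero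
    · exact mul_ne_zero (mul_ne_zero two_ne_zero (ne_of_gt (norm_pos_iff.mpr hx)))
        (pow_ne_zero 2 hcos)
    · exact neg_ne_zero.mpr (hZ j)
  -- composable pairs and the ratio g = |f|/d
  set P : Finset (MolAlphabet n × MolAlphabet n) :=
    Finset.univ.filter (fun p => p.1.1.2 = p.2.1.1) with hPdef
  have hPmem : ∀ p : MolAlphabet n × MolAlphabet n, p ∈ P ↔ W p.1 p.2 := by
    intro p
    rw [hPdef]
    simp [hWdef]
  have hPne : P.Nonempty := ⟨(a, b), (hPmem (a, b)).mpr hab⟩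
  set g : MolAlphabet n × MolAlphabet n → ℝ := fun p => |molF q Z p.1 p.2| / dOf p.1 with hgdef
  set gmin := P.inf' hPne g with hgmindef
  set gmax := P.sup' hPne g with hgmaxdef
  have hgminpos : 0 < gmin := by
    rw [hgmindef, Finset.lt_inf'_iff]
    intro p hp
    exact div_pos (abs_pos.mpr (hfne p.1 p.2 ((hPmem p).mp hp))) (hdpos p.1)
  have hgle : ∀ k₀ k₁, W k₀ k₁ → gmin ≤ g (k₀, k₁) ∧ g (k₀, k₁) ≤ gmax := by
    intro k₀ k₁ hw
    have hp : (k₀, k₁) ∈ P := (hPmem _).mpr hw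
    constructor
    · rw [hgmindef]
      exact Finset.inf'_le _ hp
    · rw [hgmaxdef]
      exact Finset.le_sup' _ hp
  set K := 2 + 2 * |Real.log gmin| + 2 * |Real.log gmax| with hKdef
  have hK2 : 2 ≤ K := by
    have h1 := abs_nonneg (Real.log gmin)
    have h2 := abs_nonneg (Real.log gmax)
    rw [hKdef]
    linarith
  set N : ℝ := (Fintype.card (MolAlphabet n) : ℝ) with hNdef
  have hN1 : 1 ≤ N := by
    rw [hNdef]
    exact_mod_cast Fintype.card_pos
  have hlogN0 : 0 ≤ Real.log N := Real.log_nonneg hN1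
  set C' := (8 * dmax / dmin) * (8 * C + 48 * C / dmin) + 1 with hC'def
  have hC'pos : 0 < C' := by positivity
  set E₀ := max (max (Real.exp (K + 2 * Real.log N + 8)) ((2 * Zmax / dmin + 2) ^ 2))
    (max (8 * C / dmin + 2 * C + 3) 3) with hE₀def
  have hE₀3 : (3 : ℝ) ≤ E₀ := le_trans (le_max_right _ 3) (le_max_right _ _)
  have hE₀pos : 0 < E₀ := by linarith
  have key : ∀ E : ℝ, E₀ < E → ∃ bt bp bm : ℝ,
      ((specRad (molM q Z E bt) = 1 ∧
          ∀ β : ℝ, specRad (molM q Z E β) = 1 → β = bt) ∧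
        (specRad (molMp q Z C E bp) = 1 ∧
          ∀ β : ℝ, specRad (molMp q Z C E β) = 1 → β = bp) ∧
        (specRad (molMm q Z C E bm) = 1 ∧
          ∀ β : ℝ, specRad (molMm q Z C E β) = 1 → β = bm) ∧
        |bp - bt| ≤ C' * bt / E ∧
        |bm - bt| ≤ C' * bt / E) := by
    intro E hE
    -- numerical facts about E
    have hEexp : Real.exp (K + 2 * Real.log N + 8) < E :=
      lt_of_le_of_lt (le_trans (le_max_left _ _) (le_max_left _ _)) hE
    have hEsq : (2 * Zmax / dmin + 2) ^ 2 < E :=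
      lt_of_le_of_lt (le_trans (le_max_right _ _) (le_max_left _ _)) hE
    have hEC : 8 * C / dmin + 2 * C + 3 < E :=
      lt_of_le_of_lt (le_trans (le_max_left _ _) (le_max_right _ _)) hE
    have hE3 : (3 : ℝ) < E := lt_of_le_of_lt hE₀3 hE
    have hEpos : (0 : ℝ) < E := by linarith only [hE3]
    have hE1 : (1 : ℝ) ≤ E := by linarith only [hE3]
    set L := Real.log E with hLdef
    have hL1 : 1 ≤ L := by
      rw [hLdef]
      have he : Real.exp 1 < 3 := lt_of_lt_of_le Real.exp_one_lt_d9 (by norm_num)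
      have h2 : Real.exp 1 < E := by linarith only [he, hE3]
      calc (1 : ℝ) = Real.log (Real.exp 1) := (Real.log_exp 1).symm
        _ ≤ Real.log E := (Real.log_le_log_iff (Real.exp_pos 1) hEpos).mpr h2.le
    have hLK : K + 2 * Real.log N + 8 ≤ L := by
      rw [hLdef]
      calc K + 2 * Real.log N + 8
          = Real.log (Real.exp (K + 2 * Real.log N + 8)) := (Real.log_exp _).symm
        _ ≤ Real.log E := (Real.log_le_log_iff (Real.exp_pos _) hEpos).mpr hEexp.le
    set u := Real.sqrt E with hudef
    have hupos : 0 < u := Real.sqrt_pos.mpr hEpos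
    have huu : u * u = E := Real.mul_self_sqrt hEpos.le
    have husq : 2 * Zmax / dmin + 2 ≤ u := by
      rw [hudef]
      have h0 : 0 ≤ 2 * Zmax / dmin + 2 := by positivity
      calc 2 * Zmax / dmin + 2 = Real.sqrt ((2 * Zmax / dmin + 2) ^ 2) := (Real.sqrt_sq h0).symm
        _ ≤ Real.sqrt E := Real.sqrt_le_sqrt hEsq.le
    have hLu : L ≤ 2 * u := by
      have h1 : Real.log u ≤ u - 1 := Real.log_le_sub_one_of_pos hupos
      have h2 : L = 2 * Real.log u := by
        rw [hLdef, ← Real.sq_sqrt hEpos.le, Real.log_pow, ← hudef]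
        push_cast
        ring
      linarith only [h1, h2]
    set s := Real.sqrt (2 * E) with hsdef
    have hspos : 0 < s := Real.sqrt_pos.mpr (by linarith only [hEpos])
    have hsu : u ≤ s := by
      rw [hudef, hsdef]
      exact Real.sqrt_le_sqrt (by linarith only [hEpos])
    have hs2u : s ≤ 2 * u := by
      have h1 : s * s = 2 * E := Real.mul_self_sqrt (by linarith only [hEpos])
      nlinarith only [h1, huu, hspos, hupos]
    have hrpow32 : (2 * E) ^ ((3 : ℝ) / 2) = (2 * E) * s := by
      rw [show ((3 : ℝ) / 2) = 1 + 1 / 2 by norm_num, Real.rpow_add (by linarith only [hEpos]),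
        Real.rpow_one, hsdef, Real.sqrt_eq_rpow]
    -- the perturbation parameters
    set δF := C * E ^ (-(1 : ℝ)) with hδFdef
    set δT := C * E ^ (-(3 : ℝ) / 2) with hδTdef
    have hδF : δF = C / E := by
      rw [hδFdef, Real.rpow_neg_one]
      ring
    have hδT : δT = C / (E * u) := by
      rw [hδTdef, show (-(3 : ℝ) / 2) = -(3 / 2) by ring, Real.rpow_neg hEpos.le,
        show ((3 : ℝ) / 2) = 1 + 1 / 2 by norm_num, Real.rpow_add hEpos, Real.rpow_one,
        hudef, Real.sqrt_eq_rpow]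
      ring
    have hδFpos : 0 < δF := by rw [hδF]; positivity
    have hδTpos : 0 < δT := by rw [hδT]; positivity
    have hδFhalf : δF ≤ 1 / 2 := by
      rw [hδF, div_le_div_iff₀ hEpos (by norm_num)]
      have h8 : 0 < 8 * C / dmin := by positivity
      linarith only [h8, hEC, hC]
    have h8C : 8 * C ≤ dmin * E := by
      have h1 : 8 * C / dmin ≤ E := by linarith only [hEC, hC]
      calc 8 * C = (8 * C / dmin) * dmin := by field_simp
        _ ≤ E * dmin := mul_le_mul_of_nonneg_right h1 hdminpos.le
        _ = dmin * E := mul_comm _ _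
    -- bounds for the transition times
    set tlo := dmin / (2 * s) with htlodef
    set thi := 2 * dmax / s with hthidef
    have htlopos : 0 < tlo := by rw [htlodef]; positivity
    have hthipos : 0 < thi := by rw [hthidef]; positivity
    have hδTtlo : δT ≤ tlo / 2 := by
      rw [hδT, htlodef, div_div, div_le_div_iff₀ (by positivity) (by positivity)]
      have m1 : 4 * C * s ≤ 4 * C * (2 * u) :=
        mul_le_mul_of_nonneg_left hs2u (by linarith only [hC])
      have m2 : 8 * C * u ≤ dmin * E * u := mul_le_mul_of_nonneg_right h8C hupos.le
      linarith only [m1, m2]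
    have hZL : Zmax * L ≤ dmin * E := by
      have hq1 : 2 * Zmax / dmin ≤ u - 2 := by linarith only [husq]
      have hq2 : 2 * Zmax ≤ (u - 2) * dmin := by
        calc 2 * Zmax = (2 * Zmax / dmin) * dmin := by field_simp
          _ ≤ (u - 2) * dmin := mul_le_mul_of_nonneg_right hq1 hdminpos.le
      have hq3 : Zmax * L ≤ Zmax * (2 * u) := mul_le_mul_of_nonneg_left hLu hZmax0
      have hq4 : (2 * Zmax) * u ≤ ((u - 2) * dmin) * u := mul_le_mul_of_nonneg_right hq2 hupos.le
      have hq6 : 0 ≤ dmin * (2 * u) := by positivity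
      have hqe : dmin * (u * u) = dmin * E := by rw [huu]
      linarith only [hq3, hq4, hq6, hqe]
    have hZt : ∀ j : Fin n, |Z j * L / ((2 * E) * s)| ≤ dmin / 2 / s := by
      intro j
      rw [abs_div, abs_mul, abs_of_nonneg (by linarith only [hL1] : (0:ℝ) ≤ L),
        abs_of_pos (by positivity : (0:ℝ) < (2 * E) * s),
        div_le_div_iff₀ (by positivity) (by positivity)]
      have h1 : |Z j| * L ≤ Zmax * L := mul_le_mul_of_nonneg_right (hZle j)
        (by linarith only [hL1])
      have m1 := mul_le_mul_of_nonneg_right h1 hspos.le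
      have m2 := mul_le_mul_of_nonneg_right hZL hspos.le
      linarith only [m1, m2]
    -- T and F bounds on composable pairs
    have htmin : ∀ i j : MolAlphabet n, W i j → tlo ≤ molT q Z E i j := by
      intro k₀ k₁ hw
      have hne2 : k₀.1.2 ≠ k₁.1.2 := by
        have h2 := k₁.2
        rw [← hw] at h2
        exact h2
      have hd1 := hdle k₀.1.1 k₀.1.2 k₀.2
      have hd2 := hdle k₀.1.2 k₁.1.2 hne2
      have habs := hZt k₀.1.2
      have h2 := (abs_le.mp habs).2
      have h3 : dmin / s ≤ (‖q k₀.1.1 - q k₀.1.2‖ + ‖q k₀.1.2 - q k₁.1.2‖) / 2 / s := by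
        gcongr
        · linarith only [hd1.1, hd2.1]
      rw [molT, hrpow32]
      have heq : dmin / s - dmin / 2 / s = tlo := by
        rw [htlodef]
        field_simp
        ring
      rw [hLdef] at h2
      linarith only [h2, h3, heq]
    have htmax : ∀ i j : MolAlphabet n, W i j → molT q Z E i j ≤ thi := by
      intro k₀ k₁ hw
      have hne2 : k₀.1.2 ≠ k₁.1.2 := by
        have h2 := k₁.2
        rw [← hw] at h2
        exact h2
      have hd1 := hdle k₀.1.1 k₀.1.2 k₀.2
      have hd2 := hdle k₀.1.2 k₁.1.2 hne2
      have habs := hZt k₀.1.2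
      have h2 := (abs_le.mp habs).1
      have h3 : (‖q k₀.1.1 - q k₀.1.2‖ + ‖q k₀.1.2 - q k₁.1.2‖) / 2 / s ≤ dmax / s := by
        gcongr
        · linarith only [hd1.2, hd2.2]
      rw [molT, hrpow32]
      have heq : dmax / s + dmin / 2 / s ≤ thi := by
        rw [hthidef, ← add_div, div_le_div_iff₀ hspos hspos]
        have m1 : (dmax + dmin / 2) * s ≤ (2 * dmax) * s := by
          have : dmax + dmin / 2 ≤ 2 * dmax := by linarith only [hdminmax, hdminpos]
          exact mul_le_mul_of_nonneg_right this hspos.le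
        linarith only [m1]
      rw [hLdef] at h2
      linarith only [h2, h3, heq]
    have hFb : ∀ i j : MolAlphabet n, W i j →
        2 * L - K ≤ molFE q Z E i j ∧ molFE q Z E i j ≤ 2 * L + K := by
      intro k₀ k₁ hw
      have hgp : 0 < g (k₀, k₁) := lt_of_lt_of_le hgminpos (hgle k₀ k₁ hw).1
      have heq : molFE q Z E k₀ k₁ = 2 * (Real.log (2 * E) + Real.log (g (k₀, k₁))) := by
        rw [molFE]
        have h1 : 2 * E * |molF q Z k₀ k₁| / ‖q k₀.1.1 - q k₀.1.2‖
            = (2 * E) * g (k₀, k₁) := by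
          rw [hgdef]
          simp only
          rw [hdOf]
          simp only
          ring
        rw [h1, Real.log_mul (by positivity) (ne_of_gt hgp)]
      have hg1 : Real.log gmin ≤ Real.log (g (k₀, k₁)) :=
        (Real.log_le_log_iff hgminpos hgp).mpr (hgle _ _ hw).1
      have hgmaxpos : 0 < gmax := lt_of_lt_of_le hgp (hgle _ _ hw).2
      have hg2 : Real.log (g (k₀, k₁)) ≤ Real.log gmax :=
        (Real.log_le_log_iff hgp hgmaxpos).mpr (hgle _ _ hw).2
      have hlog2E : Real.log (2 * E) = Real.log 2 + L := by
        rw [Real.log_mul two_ne_zero (ne_of_gt hEpos), hLdef]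
      have hlog2a : 0 ≤ Real.log 2 := Real.log_nonneg one_le_two
      have hlog2b : Real.log 2 ≤ 1 := by
        linarith only [Real.log_le_sub_one_of_pos (by norm_num : (0:ℝ) < 2)]
      have ha1 : -|Real.log gmin| ≤ Real.log gmin := neg_abs_le _
      have ha2 : Real.log gmax ≤ |Real.log gmax| := le_abs_self _
      have ha3 := abs_nonneg (Real.log gmin)
      have ha4 := abs_nonneg (Real.log gmax)
      constructor
      · rw [heq, hlog2E, hKdef]
        linarith only [hg1, hg2, hlog2a, hlog2b, ha1, ha2, ha3, ha4]
      · rw [heq, hlog2E, hKdef]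
        linarith only [hg1, hg2, hlog2a, hlog2b, ha1, ha2, ha3, ha4]
    -- the Perron-value analysis
    have hψ0 : taPsi W (molFE q Z E) (molT q Z E) 0 ≤ -L := by
      have h1 := taPsi_zero_le W (molFE q Z E) (molT q Z E) a b hab hba (2 * L - K)
        (fun i j h => (hFb i j h).1)
      rw [← hNdef] at h1
      linarith only [h1, hLK, hlogN0, hK2]
    obtain ⟨bt, hbt, hbtu⟩ := taSolve W (molFE q Z E) (molT q Z E) a b hab hba tlo thi
      htlopos htmin htmax 0 0 htlopos
    have hbt0 : taPsi W (molFE q Z E) (molT q Z E) bt = 0 := by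
      rw [hbt]; ring
    obtain ⟨bp, hbp, hbpu⟩ := taSolve W (molFE q Z E) (molT q Z E) a b hab hba tlo thi
      htlopos htmin htmax (2 * Real.log (1 + δF)) δT
      (by linarith only [hδTtlo, htlopos])
    obtain ⟨bm, hbm, hbmu⟩ := taSolve W (molFE q Z E) (molT q Z E) a b hab hba tlo thi
      htlopos htmin htmax (2 * Real.log (1 - δF)) (-δT)
      (by linarith only [hδTpos, htlopos])
    -- spectral radius equations
    have hMeq : ∀ β, molM q Z E β = taM W (molFE q Z E) (molT q Z E) β := fun β => rfl
    have hiff_t : ∀ β, specRad (molM q Z E β) = 1 ↔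
        taPsi W (molFE q Z E) (molT q Z E) β = 0 := by
      intro β
      rw [hMeq β]
      exact taSpec_eq_one_iff W (molFE q Z E) (molT q Z E) a b hab hba β
    have hMp : ∀ β, molMp q Z C E β
        = Real.exp (-(2 * Real.log (1 + δF) + δT * β)) • taM W (molFE q Z E) (molT q Z E) β := by
      intro β
      ext i j
      simp only [molMp, taM, Matrix.smul_apply, Matrix.of_apply, smul_eq_mul, hWdef, hδFdef,
        hδTdef]
      by_cases hw : Composable i j
      · rw [if_pos hw, if_pos hw, ← Real.exp_add]
        congr 1
        ring
      · rw [if_neg hw, if_neg hw, mul_zero]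
    have hiff_p : ∀ β, specRad (molMp q Z C E β) = 1 ↔
        taPsi W (molFE q Z E) (molT q Z E) β = 2 * Real.log (1 + δF) + δT * β := by
      intro β
      rw [hMp β, taSpec_smul_eq_one_iff W (molFE q Z E) (molT q Z E) a b hab hba _ β, neg_neg]
    have hMm : ∀ β, molMm q Z C E β
        = Real.exp (-(2 * Real.log (1 - δF) + -δT * β)) • taM W (molFE q Z E) (molT q Z E) β := by
      intro β
      ext i j
      simp only [molMm, taM, Matrix.smul_apply, Matrix.of_apply, smul_eq_mul, hWdef, hδFdef,
        hδTdef]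
      by_cases hw : Composable i j
      · rw [if_pos hw, if_pos hw, ← Real.exp_add]
        congr 1
        ring
      · rw [if_neg hw, if_neg hw, mul_zero]
    have hiff_m : ∀ β, specRad (molMm q Z C E β) = 1 ↔
        taPsi W (molFE q Z E) (molT q Z E) β = 2 * Real.log (1 - δF) + -δT * β := by
      intro β
      rw [hMm β, taSpec_smul_eq_one_iff W (molFE q Z E) (molT q Z E) a b hab hba _ β, neg_neg]
    -- quantitative bounds
    have hd := fun (β₁ β₂ : ℝ) (h : β₁ ≤ β₂) =>
      taPsi_diff W (molFE q Z E) (molT q Z E) a b hab hba tlo thi htmin htmax β₁ β₂ h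
    have hψlow : ∀ β : ℝ, 0 ≤ β →
        -(3 * L) + β * tlo ≤ taPsi W (molFE q Z E) (molT q Z E) β := by
      intro β hβ
      have h1 := taPsi_lower W (molFE q Z E) (molT q Z E) a b hab hba β
      have hFab := (hFb a b hab).2
      have hFba := (hFb b a hba).2
      have hTab := htmin a b hab
      have hTba := htmin b a hba
      have hKL : K ≤ L := by linarith only [hLK, hlogN0]
      have m := mul_le_mul_of_nonneg_left
        (by linarith only [hTab, hTba] : tlo ≤ (molT q Z E a b + molT q Z E b a) / 2) hβ
      linarith only [h1, m, hFab, hFba, hKL]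
    have hbtpos : 0 < bt := by
      by_contra hcon
      push_neg at hcon
      have h1 := (hd bt 0 hcon).1
      have m := mul_nonneg htlopos.le (neg_nonneg.mpr hcon)
      linarith only [h1, m, hψ0, hbt0, hL1]
    have hbtup : bt * tlo ≤ 3 * L := by
      have h1 := hψlow bt hbtpos.le
      linarith only [h1, hbt0]
    have hbtlow : L ≤ thi * bt := by
      have h1 := (hd 0 bt hbtpos.le).2
      linarith only [h1, hψ0, hbt0]
    have hrp0 : 0 ≤ 2 * Real.log (1 + δF) :=
      mul_nonneg (by norm_num) (Real.log_nonneg (by linarith only [hδFpos]))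
    have hrple : 2 * Real.log (1 + δF) ≤ 2 * δF := by
      linarith only [Real.log_le_sub_one_of_pos (by linarith only [hδFpos] : (0:ℝ) < 1 + δF)]
    have hrm0 : 2 * Real.log (1 - δF) ≤ 0 := by
      linarith only [Real.log_nonpos (by linarith only [hδFhalf] : (0:ℝ) ≤ 1 - δF)
        (by linarith only [hδFpos] : 1 - δF ≤ 1)]
    have hrmge : -(4 * δF) ≤ 2 * Real.log (1 - δF) := by
      have hexp : Real.exp (-(2 * δF)) ≤ 1 - δF := by
        have h2 := Real.add_one_le_exp (2 * δF)
        have h3 : Real.exp (-(2 * δF)) * Real.exp (2 * δF) = 1 := by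
          rw [← Real.exp_add]
          simp
        have h5 : Real.exp (-(2 * δF)) * (2 * δF + 1) ≤ 1 := by
          calc Real.exp (-(2 * δF)) * (2 * δF + 1)
              ≤ Real.exp (-(2 * δF)) * Real.exp (2 * δF) :=
                mul_le_mul_of_nonneg_left h2 (Real.exp_pos _).le
            _ = 1 := h3
        have h6 : 0 ≤ δF * (1 - 2 * δF) :=
          mul_nonneg hδFpos.le (by linarith only [hδFhalf])
        nlinarith only [h5, h6, hδFpos, hδFhalf, Real.exp_pos (-(2 * δF))]
      have h4 := (Real.log_le_log_iff (Real.exp_pos _)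
        (by linarith only [hδFhalf] : (0:ℝ) < 1 - δF)).mpr hexp
      rw [Real.log_exp] at h4
      linarith only [h4]
    have hbppos : 0 ≤ bp := by
      by_contra hcon
      push_neg at hcon
      have h1 := (hd bp 0 hcon.le).1
      have m1 : 0 ≤ (tlo / 2 - δT) * (-bp) :=
        mul_nonneg (by linarith only [hδTtlo]) (by linarith only [hcon])
      have m3 : 0 ≤ tlo / 2 * (-bp) :=
        mul_nonneg (by linarith only [htlopos]) (by linarith only [hcon])
      linarith only [h1, hbp, hψ0, hL1, hrp0, m1, m3]
    have hbpup : bp * tlo ≤ 8 * L := by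
      have h1 := hψlow bp hbppos
      have h2 : δT * bp ≤ tlo / 2 * bp := mul_le_mul_of_nonneg_right hδTtlo hbppos
      linarith only [h1, h2, hbp, hrple, hδFhalf, hL1]
    have hbtbp : bt ≤ bp := by
      by_contra hcon
      push_neg at hcon
      have h1 := (hd bp bt hcon.le).1
      have m1 := mul_nonneg hδTpos.le hbppos
      have m2 := mul_pos htlopos (by linarith only [hcon] : (0:ℝ) < bt - bp)
      linarith only [h1, hbp, hbt0, hrp0, m1, m2]
    have hgapp : tlo * (bp - bt) ≤ 2 * δF + δT * bp := by
      have h1 := (hd bt bp hbtbp).1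
      linarith only [h1, hbp, hbt0, hrple]
    have hbmpos : 0 ≤ bm := by
      by_contra hcon
      push_neg at hcon
      have h1 := (hd bm 0 hcon.le).1
      have hL10 : 10 ≤ L := by linarith only [hLK, hK2, hlogN0]
      have m1 := mul_nonneg hδTpos.le (neg_nonneg.mpr hcon.le)
      have m2 := mul_nonneg htlopos.le (neg_nonneg.mpr hcon.le)
      linarith only [h1, hbm, hrmge, hδFhalf, hψ0, hL10, m1, m2]
    have hbmbt : bm ≤ bt := by
      by_contra hcon
      push_neg at hcon
      have h1 := (hd bt bm hcon.le).1
      have m1 := mul_nonneg hδTpos.le hbmpos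
      have m2 := mul_pos htlopos (by linarith only [hcon] : (0:ℝ) < bm - bt)
      linarith only [h1, hbm, hbt0, hrm0, m1, m2]
    have hgapm : tlo * (bt - bm) ≤ 4 * δF + δT * bt := by
      have h1 := (hd bm bt hbmbt).1
      have h2 : δT * bm ≤ δT * bt := mul_le_mul_of_nonneg_left hbmbt hδTpos.le
      linarith only [h1, h2, hbm, hbt0, hrmge]
    -- final arithmetic
    have htlo2s : tlo * (2 * s) = dmin := by
      rw [htlodef]
      field_simp
    have hthis : thi * s = 2 * dmax := by
      rw [hthidef]
      field_simp
    have hδFE : δF * E = C := by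
      rw [hδF]
      field_simp
    have hδTEu : δT * (E * u) = C := by
      rw [hδT]
      field_simp
    have hC'dmin : C' * dmin ^ 2 = 64 * C * dmax * dmin + 384 * C * dmax + dmin ^ 2 := by
      rw [hC'def]
      field_simp
      ring
    have s4 : L * u ≤ 2 * dmax * bt := by
      have h1 := mul_le_mul_of_nonneg_right hbtlow hspos.le
      have h2 : thi * bt * s = 2 * dmax * bt := by
        rw [← hthis]
        ring
      have h3 : L * u ≤ L * s := mul_le_mul_of_nonneg_left hsu (by linarith only [hL1])
      linarith only [h1, h2, h3]
    have sF2 : s * u ≤ 2 * E := by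
      have m := mul_le_mul_of_nonneg_right hs2u hupos.le
      linarith only [m, huu]
    have hfinal : ∀ A B : ℝ, 0 ≤ A → 0 ≤ B → B * dmin ≤ 40 * (L * u) →
        tlo * A ≤ 4 * δF + δT * B → A * E ≤ C' * bt := by
      intro A B hA hB hBd hgap
      have c1 := mul_le_mul_of_nonneg_right hgap (by positivity : (0:ℝ) ≤ 2 * s * (E * u))
      have c2 : tlo * A * (2 * s * (E * u)) = dmin * (A * (E * u)) := by
        rw [← htlo2s]
        ring
      have c3 : (4 * δF + δT * B) * (2 * s * (E * u))
          = 8 * (δF * E) * (s * u) + 2 * (δT * (E * u)) * (s * B) := by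
        ring
      rw [c2, c3, hδFE, hδTEu] at c1
      have c4 : 8 * C * (s * u) ≤ 8 * C * (2 * E) :=
        mul_le_mul_of_nonneg_left sF2 (by linarith only [hC])
      have c5 : 2 * C * (s * B) ≤ 2 * C * (2 * u * B) := by
        refine mul_le_mul_of_nonneg_left ?_ (by linarith only [hC])
        have m := mul_le_mul_of_nonneg_right hs2u hB
        linarith only [m]
      have c6 : dmin * (A * (E * u)) ≤ 16 * C * E + 4 * C * (u * B) := by
        linarith only [c1, c4, c5]
      have c7 := mul_le_mul_of_nonneg_left c6 hdminpos.le
      have c8 : 4 * C * u * (B * dmin) ≤ 4 * C * u * (40 * (L * u)) :=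
        mul_le_mul_of_nonneg_left hBd (by positivity)
      have c9 : 16 * C * E * dmin * 1 ≤ 16 * C * E * dmin * L :=
        mul_le_mul_of_nonneg_left hL1 (by positivity)
      have c10 := mul_le_mul_of_nonneg_right s4 hupos.le
      have c11 : 16 * C * dmin * (L * u * u) ≤ 16 * C * dmin * (2 * dmax * bt * u) :=
        mul_le_mul_of_nonneg_left c10 (by positivity)
      have c12 : 160 * C * (L * u * u) ≤ 160 * C * (2 * dmax * bt * u) :=
        mul_le_mul_of_nonneg_left c10 (by positivity)
      have hscal : 32 * C * dmax * dmin + 320 * C * dmax ≤ C' * dmin ^ 2 := by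
        rw [hC'dmin]
        have m1 : 0 ≤ C * dmax * dmin := by positivity
        have m2 : 0 ≤ C * dmax := by positivity
        have m3 : 0 ≤ dmin ^ 2 := sq_nonneg _
        linarith only [m1, m2, m3]
      have e1 : 16 * C * E * dmin * L = 16 * C * dmin * (L * u * u) := by
        rw [← huu]
        ring
      have c13 : A * E * (u * dmin ^ 2) ≤ C' * bt * (u * dmin ^ 2) := by
        have hbtu : 0 ≤ bt * u := mul_nonneg hbtpos.le hupos.le
        have c14 : (32 * C * dmax * dmin + 320 * C * dmax) * (bt * u)
            ≤ (C' * dmin ^ 2) * (bt * u) :=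
          mul_le_mul_of_nonneg_right hscal hbtu
        linarith only [c7, c8, c9, c11, c12, c14, e1]
      exact le_of_mul_le_mul_right c13 (by positivity : (0:ℝ) < u * dmin ^ 2)
    have hLupos : 0 ≤ L * u := mul_nonneg (by linarith only [hL1]) hupos.le
    have hbpd : bp * dmin ≤ 40 * (L * u) := by
      have h1 := mul_le_mul_of_nonneg_right hbpup (by positivity : (0:ℝ) ≤ 2 * s)
      have h2 : bp * tlo * (2 * s) = bp * dmin := by
        rw [← htlo2s]
        ring
      have h3 : 16 * (L * s) ≤ 16 * (L * (2 * u)) :=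
        mul_le_mul_of_nonneg_left (mul_le_mul_of_nonneg_left hs2u (by linarith only [hL1]))
          (by norm_num)
      linarith only [h1, h2, h3, hLupos]
    have hbtd : bt * dmin ≤ 40 * (L * u) := by
      have h1 := mul_le_mul_of_nonneg_right hbtup (by positivity : (0:ℝ) ≤ 2 * s)
      have h2 : bt * tlo * (2 * s) = bt * dmin := by
        rw [← htlo2s]
        ring
      have h3 : 6 * (L * s) ≤ 6 * (L * (2 * u)) :=
        mul_le_mul_of_nonneg_left (mul_le_mul_of_nonneg_left hs2u (by linarith only [hL1]))
          (by norm_num)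
      linarith only [h1, h2, h3, hLupos]
    have hineqp : |bp - bt| ≤ C' * bt / E := by
      rw [abs_of_nonneg (by linarith only [hbtbp]), le_div_iff₀ hEpos]
      refine hfinal (bp - bt) bp (by linarith only [hbtbp]) hbppos hbpd ?_
      linarith only [hgapp, hδFpos]
    have hineqm : |bm - bt| ≤ C' * bt / E := by
      rw [abs_of_nonpos (by linarith only [hbmbt]), le_div_iff₀ hEpos]
      have hneg : -(bm - bt) = bt - bm := by ring
      rw [hneg]
      exact hfinal (bt - bm) bt (by linarith only [hbmbt]) hbtpos.le hbtd hgapm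
    refine ⟨bt, bp, bm,
      ⟨(hiff_t bt).mpr hbt0, fun β h => hbtu β (by
        show taPsi W (molFE q Z E) (molT q Z E) β = 0 + 0 * β
        rw [(hiff_t β).mp h]
        ring)⟩,
      ⟨(hiff_p bp).mpr hbp, fun β h => hbpu β ((hiff_p β).mp h)⟩,
      ⟨(hiff_m bm).mpr hbm, fun β h => hbmu β ((hiff_m β).mp h)⟩,
      hineqp, hineqm⟩
  have key' : ∀ E : ℝ, ∃ bt bp bm : ℝ, E₀ < E →
      ((specRad (molM q Z E bt) = 1 ∧
          ∀ β : ℝ, specRad (molM q Z E β) = 1 → β = bt) ∧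
        (specRad (molMp q Z C E bp) = 1 ∧
          ∀ β : ℝ, specRad (molMp q Z C E β) = 1 → β = bp) ∧
        (specRad (molMm q Z C E bm) = 1 ∧
          ∀ β : ℝ, specRad (molMm q Z C E β) = 1 → β = bm) ∧
        |bp - bt| ≤ C' * bt / E ∧
        |bm - bt| ≤ C' * bt / E) := by
    intro E
    by_cases hE : E₀ < E
    · obtain ⟨bt, bp, bm, h⟩ := key E hE
      exact ⟨bt, bp, bm, fun _ => h⟩
    · exact ⟨0, 0, 0, fun h => absurd h hE⟩
  choose f1 f2 f3 hf using key'
  exact ⟨E₀, hE₀pos, C', hC'pos, f1, f2, f3, fun E hE => hf E hE⟩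
end

section
/- Suppose in addition that T takes values in the positive integers. Suppose there are constants C_h ≥ 1 and h ≥ 0 such that #σ^{-m}(x) ≤ C_h·e^{m·h} for all x ∈ X⁺, m ∈ ℕ, that T is bounded, and that inf F ≥ h + ln 2; set ω⁻ := (inf F − h)/sup T > 0. Then for every complex ω with 0 < Re(ω) < ω⁻ and every x ∈ X⁺: (a) the Fourier–Laplace transform κ̂^x(ω) := Σ_{t ∈ ℤ} κ^x(t)·e^{ω t} converges absolutely (indeed κ^x(t) = κ^x(0) for all t ≤ 0, so Σ_{t ≤ 0} κ^x(t) e^{ω t} = κ^x(0)/(1 − e^{−ω}), and Σ_{t ≥ 1} |κ^x(t) e^{ω t}| ≤ C/(1 − e^{Re(ω) − ω⁻}) for a constant C); and (b) it satisfies the transformed renewal equation κ̂^x(ω) = 1/(1 − e^{−ω}) + Σ_{y ∈ σ^{-1}(x)} exp(ω·T(y) − F(y))·κ̂^y(ω). -/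
/-! Statement 7 (lattice case): absolute convergence of the Fourier–Laplace transform of
the renewal sums and the transformed renewal equation. -/

variable {A : Type*}

/-- The Fourier–Laplace transform `κ̂^x(ω) = ∑_{t ∈ ℤ} κ^x(t) e^{ω t}`. -/
noncomputable def kappaHat (R : A → A → Prop) (F T : (ℕ → A) → ℝ)
    (x : ℕ → A) (ω : ℂ) : ℂ :=
  ∑' t : ℤ, (kappa R F T x (t : ℝ) : ℂ) * Complex.exp (ω * (t : ℂ))

section Stmt7Aux

variable {R : A → A → Prop} {F T : (ℕ → A) → ℝ} {b M Ch h : ℝ}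

lemma shift_mem {x : ℕ → A} (hx : x ∈ OneSubshift R) : shiftN x ∈ OneSubshift R :=
  fun i => hx (i + 1)

lemma iter_shift_mem {x : ℕ → A} (hx : x ∈ OneSubshift R) (m : ℕ) :
    shiftN^[m] x ∈ OneSubshift R := by
  induction m with
  | zero => exact hx
  | succ n ih => rw [Function.iterate_succ_apply']; exact shift_mem ih

lemma birkhoff_succ (f : (ℕ → A) → ℝ) (m : ℕ) (z : ℕ → A) :
    birkhoffN f (m + 1) z = birkhoffN f m z + f (shiftN^[m] z) :=
  Finset.sum_range_succ _ _

lemma birkhoff_zero (f : (ℕ → A) → ℝ) (z : ℕ → A) : birkhoffN f 0 z = 0 :=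
  Finset.sum_range_zero _

lemma birkhoff_lb (hFb : ∀ y ∈ OneSubshift R, b ≤ F y) {x : ℕ → A}
    (hx : x ∈ OneSubshift R) (m : ℕ) : (m : ℝ) * b ≤ birkhoffN F m x := by
  calc (m : ℝ) * b = ∑ _i ∈ Finset.range m, b := by
        rw [Finset.sum_const, Finset.card_range, nsmul_eq_mul]
    _ ≤ birkhoffN F m x :=
        Finset.sum_le_sum fun i _ => hFb _ (iter_shift_mem hx i)

lemma birkhoffT_ub (hTM : ∀ y ∈ OneSubshift R, T y ≤ M) {x : ℕ → A}
    (hx : x ∈ OneSubshift R) (m : ℕ) : birkhoffN T m x ≤ (m : ℝ) * M := by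
  calc birkhoffN T m x ≤ ∑ _i ∈ Finset.range m, M :=
        Finset.sum_le_sum fun i _ => hTM _ (iter_shift_mem hx i)
    _ = (m : ℝ) * M := by rw [Finset.sum_const, Finset.card_range, nsmul_eq_mul]

lemma birkhoffT_nonneg (hT1 : ∀ y ∈ OneSubshift R, 1 ≤ T y) {x : ℕ → A}
    (hx : x ∈ OneSubshift R) (m : ℕ) : 0 ≤ birkhoffN T m x :=
  Finset.sum_nonneg fun i _ => le_trans zero_le_one (hT1 _ (iter_shift_mem hx i))

lemma renewalTerm_nonneg (t : ℝ) (m : ℕ) (y : ℕ → A) : 0 ≤ renewalTerm F T t m y := by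
  unfold renewalTerm
  positivity

lemma renewalTerm_le (hFb : ∀ y ∈ OneSubshift R, b ≤ F y)
    (hTM : ∀ y ∈ OneSubshift R, T y ≤ M) {y : ℕ → A} (hy : y ∈ OneSubshift R)
    (t : ℝ) (m : ℕ) :
    renewalTerm F T t m y ≤
      Real.exp (-((m : ℝ) * b)) * (if t ≤ (m : ℝ) * M then 1 else 0) := by
  unfold renewalTerm
  by_cases h : t ≤ birkhoffN T m y
  · rw [if_pos h, if_pos (h.trans (birkhoffT_ub hTM hy m))]
    simpa using Real.exp_le_exp.2 (neg_le_neg (birkhoff_lb hFb hy m))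
  · rw [if_neg h, mul_zero]
    positivity

lemma preim_mem_subshift {m : ℕ} {x y : ℕ → A} (hy : y ∈ preim R m x) :
    y ∈ OneSubshift R := hy.1

lemma preim_zero {x : ℕ → A} (hx : x ∈ OneSubshift R) : preim R 0 x = {x} := by
  ext y
  simp only [preim, Set.mem_setOf_eq, Function.iterate_zero, id_eq, Set.mem_singleton_iff]
  constructor
  · rintro ⟨-, rfl⟩; rfl
  · rintro rfl; exact ⟨hx, rfl⟩

lemma fiber_tsum_le (hfin : ∀ (m : ℕ) (x : ℕ → A), (preim R m x).Finite)
    (hcard : ∀ (m : ℕ), ∀ x ∈ OneSubshift R,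
      (Nat.card (preim R m x) : ℝ) ≤ Ch * Real.exp (m * h))
    {x : ℕ → A} (hx : x ∈ OneSubshift R) (m : ℕ) {c : ℝ} (hc : 0 ≤ c)
    {f : (ℕ → A) → ℝ} (hf : ∀ y ∈ preim R m x, f y ≤ c) :
    ∑' y : preim R m x, f y.val ≤ Ch * Real.exp (m * h) * c := by
  haveI := (hfin m x).fintype
  rw [tsum_fintype]
  calc ∑ y : preim R m x, f y.val ≤ Fintype.card (preim R m x) • c :=
        Finset.sum_le_card_nsmul _ _ _ (fun y _ => hf y.val y.2)
    _ = (Nat.card (preim R m x) : ℝ) * c := by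
        rw [Nat.card_eq_fintype_card, nsmul_eq_mul]
    _ ≤ Ch * Real.exp (m * h) * c :=
        mul_le_mul_of_nonneg_right (hcard m x hx) hc


lemma renewalTerm_succ (F T : (ℕ → A) → ℝ) (t : ℝ) (m : ℕ) (z : ℕ → A) :
    renewalTerm F T t (m + 1) z =
      Real.exp (-(F (shiftN^[m] z))) * renewalTerm F T (t - T (shiftN^[m] z)) m z := by
  unfold renewalTerm
  rw [birkhoff_succ, birkhoff_succ]
  have hiff : (t ≤ birkhoffN T m z + T (shiftN^[m] z)) ↔
      (t - T (shiftN^[m] z) ≤ birkhoffN T m z) := sub_le_iff_le_add.symm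
  rw [if_congr hiff rfl rfl, neg_add, Real.exp_add]
  ring

lemma preim_one_step {x y : ℕ → A} (hy : y ∈ preim R 1 x) (m : ℕ) {z : ℕ → A}
    (hz : z ∈ preim R m y) : z ∈ preim R (m + 1) x := by
  refine ⟨hz.1, ?_⟩
  have h1 : shiftN^[m + 1] z = shiftN^[1] (shiftN^[m] z) := by
    rw [add_comm m 1, Function.iterate_add_apply]
  rw [h1, hz.2]
  exact hy.2

lemma step_preim_one {z x : ℕ → A} (m : ℕ) (hz : z ∈ preim R (m + 1) x) :
    shiftN^[m] z ∈ preim R 1 x := by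
  refine ⟨iter_shift_mem hz.1 m, ?_⟩
  have h1 : shiftN^[1] (shiftN^[m] z) = shiftN^[m + 1] z := by
    rw [add_comm m 1, Function.iterate_add_apply]
  rw [h1, hz.2]

/-- Decomposition of `(m+1)`-fold preimages as `1`-fold followed by `m`-fold. -/
def preimSuccEquiv (R : A → A → Prop) (x : ℕ → A) :
    (Σ m : ℕ, preim R (m + 1) x) ≃ (Σ y : preim R 1 x, Σ m : ℕ, preim R m y.val) where
  toFun p := ⟨⟨shiftN^[p.1] p.2.val, step_preim_one p.1 p.2.2⟩, p.1,
    ⟨p.2.val, p.2.2.1, rfl⟩⟩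
  invFun q := ⟨q.2.1, ⟨q.2.2.val, preim_one_step q.1.2 q.2.1 q.2.2.2⟩⟩
  left_inv p := rfl
  right_inv q := by
    rcases q with ⟨⟨y, hy⟩, m, ⟨z, hz⟩⟩
    have : shiftN^[m] z = y := hz.2
    subst this
    rfl


lemma norm_mul_exp (a : ℝ) (ha : 0 ≤ a) (ω : ℂ) (r : ℝ) :
    ‖(a : ℂ) * Complex.exp (ω * (r : ℂ))‖ = a * Real.exp (ω.re * r) := by
  rw [norm_mul, Complex.norm_real, Real.norm_of_nonneg ha,
    Complex.norm_exp]
  congr 2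
  simp [Complex.mul_re]

lemma norm_mul_exp_int (a : ℝ) (ha : 0 ≤ a) (ω : ℂ) (t : ℤ) :
    ‖(a : ℂ) * Complex.exp (ω * (t : ℂ))‖ = a * Real.exp (ω.re * t) := by
  rw [norm_mul, Complex.norm_real, Real.norm_of_nonneg ha,
    Complex.norm_exp]
  congr 2
  simp [Complex.mul_re]

lemma norm_exp_neg_lt_one {ω : ℂ} (hσ0 : 0 < ω.re) : ‖Complex.exp (-ω)‖ < 1 := by
  rw [Complex.norm_exp]
  simp only [Complex.neg_re]
  exact Real.exp_lt_one_iff.2 (by linarith)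

lemma one_sub_exp_neg_ne_zero {ω : ℂ} (hσ0 : 0 < ω.re) : 1 - Complex.exp (-ω) ≠ 0 := by
  intro hcon
  have h1 : Complex.exp (-ω) = 1 := by
    have := sub_eq_zero.1 hcon
    exact this.symm
  have := norm_exp_neg_lt_one hσ0
  rw [h1] at this
  simp at this

end Stmt7Aux

/-- Hypotheses bundle for convenience. -/
structure Hyp {A : Type*} (R : A → A → Prop) (F T : (ℕ → A) → ℝ) (b M Ch h : ℝ) : Prop where
  hfin : ∀ (m : ℕ) (x : ℕ → A), (preim R m x).Finite
  hcard : ∀ (m : ℕ), ∀ x ∈ OneSubshift R,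
      (Nat.card (preim R m x) : ℝ) ≤ Ch * Real.exp (m * h)
  hFb : ∀ y ∈ OneSubshift R, b ≤ F y
  hTM : ∀ y ∈ OneSubshift R, T y ≤ M
  hT1 : ∀ y ∈ OneSubshift R, 1 ≤ T y
  hM : 1 ≤ M
  hCh : 1 ≤ Ch
  hh : 0 ≤ h
  hlog : Real.log 2 ≤ b - h
  hTk : ∀ x ∈ OneSubshift R, ∃ k : ℕ, 0 < k ∧ T x = (k : ℝ)

namespace Hyp

variable {A : Type*} {R : A → A → Prop} {F T : (ℕ → A) → ℝ} {b M Ch h : ℝ}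
variable (H : Hyp R F T b M Ch h)
include H

lemma hq_half : Real.exp (h - b) ≤ 1 / 2 := by
  have h2 : Real.exp (h - b) ≤ Real.exp (-Real.log 2) :=
    Real.exp_le_exp.2 (by linarith [H.hlog])
  rwa [Real.exp_neg, Real.exp_log (by norm_num : (0:ℝ) < 2), ← one_div] at h2

lemma hq1 : Real.exp (h - b) < 1 := lt_of_le_of_lt H.hq_half (by norm_num)

lemma fiber_renewal_le {x : ℕ → A} (hx : x ∈ OneSubshift R) (t : ℝ) (m : ℕ) :
    ∑' y : preim R m x, renewalTerm F T t m y.val ≤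
      Ch * (Real.exp (h - b)) ^ m * (if t ≤ (m : ℝ) * M then 1 else 0) := by
  have h1 : ∑' y : preim R m x, renewalTerm F T t m y.val ≤
      Ch * Real.exp (m * h) * (Real.exp (-((m : ℝ) * b)) *
        (if t ≤ (m : ℝ) * M then 1 else 0)) := by
    refine fiber_tsum_le H.hfin H.hcard hx m
      (c := Real.exp (-((m : ℝ) * b)) * (if t ≤ (m : ℝ) * M then 1 else 0))
      (f := fun y => renewalTerm F T t m y) ?_ ?_
    · exact mul_nonneg (Real.exp_nonneg _) (by split <;> norm_num)
    · exact fun y hy => renewalTerm_le H.hFb H.hTM hy.1 t m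
  calc ∑' y : preim R m x, renewalTerm F T t m y.val
      ≤ Ch * Real.exp (m * h) * (Real.exp (-((m : ℝ) * b)) *
        (if t ≤ (m : ℝ) * M then 1 else 0)) := h1
    _ = Ch * (Real.exp (h - b)) ^ m * (if t ≤ (m : ℝ) * M then 1 else 0) := by
        rw [← Real.exp_nat_mul]
        rw [show (m : ℝ) * (h - b) = (m : ℝ) * h + -((m : ℝ) * b) by ring, Real.exp_add]
        ring

lemma fiber_renewal_le' {x : ℕ → A} (hx : x ∈ OneSubshift R) (t : ℝ) (m : ℕ) :
    ∑' y : preim R m x, renewalTerm F T t m y.val ≤ Ch * (Real.exp (h - b)) ^ m := by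
  refine (H.fiber_renewal_le hx t m).trans ?_
  have h2 : (if t ≤ (m : ℝ) * M then (1:ℝ) else 0) ≤ 1 := by split <;> norm_num
  have hCh0 : (0:ℝ) ≤ Ch := le_trans zero_le_one H.hCh
  have h0 : (0:ℝ) ≤ Ch * (Real.exp (h - b)) ^ m := by positivity
  nlinarith

lemma summable_renewal {x : ℕ → A} (hx : x ∈ OneSubshift R) (t : ℝ) :
    Summable (fun p : Σ m : ℕ, preim R m x => renewalTerm F T t p.1 p.2.val) := by
  rw [summable_sigma_of_nonneg
    (fun p : (Σ m : ℕ, preim R m x) => renewalTerm_nonneg t p.1 p.2.val)]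
  constructor
  · intro m
    haveI := (H.hfin m x).to_subtype
    exact Summable.of_finite
  · refine Summable.of_nonneg_of_le ?_ (fun m => H.fiber_renewal_le' hx t m)
      ((summable_geometric_of_lt_one (Real.exp_nonneg _) H.hq1).mul_left Ch)
    exact fun m => tsum_nonneg (fun y : preim R m x => renewalTerm_nonneg t m y.val)

omit H in
lemma kappa_nonneg (x : ℕ → A) (t : ℝ) : 0 ≤ kappa R F T x t :=
  tsum_nonneg (fun p => renewalTerm_nonneg t p.1 p.2.val)

lemma kappa_eq_fiber {x : ℕ → A} (hx : x ∈ OneSubshift R) (t : ℝ) :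
    kappa R F T x t = ∑' m : ℕ, ∑' y : preim R m x, renewalTerm F T t m y.val :=
  Summable.tsum_sigma (H.summable_renewal hx t)

lemma kappa_const {x : ℕ → A} (hx : x ∈ OneSubshift R) {t : ℝ} (ht : t ≤ 0) :
    kappa R F T x t = kappa R F T x 0 := by
  apply tsum_congr
  rintro ⟨m, y, hy⟩
  unfold renewalTerm
  have hS : 0 ≤ birkhoffN T m y := birkhoffT_nonneg H.hT1 hy.1 m
  rw [if_pos (ht.trans hS), if_pos hS]


lemma summable_ind (t : ℝ) :
    Summable (fun m : ℕ => Ch * (Real.exp (h - b)) ^ m * (if t ≤ (m : ℝ) * M then 1 else 0)) := by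
  have hCh0 : (0:ℝ) ≤ Ch := le_trans zero_le_one H.hCh
  refine Summable.of_nonneg_of_le (fun m => ?_) (fun m => ?_)
    ((summable_geometric_of_lt_one (Real.exp_nonneg _) H.hq1).mul_left Ch)
  · exact mul_nonneg (by positivity) (by split <;> norm_num)
  · have h2 : (if t ≤ (m : ℝ) * M then (1:ℝ) else 0) ≤ 1 := by split <;> norm_num
    have h3 : (0:ℝ) ≤ Ch * (Real.exp (h - b)) ^ m := by positivity
    nlinarith

lemma kappa_le_tsum {x : ℕ → A} (hx : x ∈ OneSubshift R) (t : ℝ) :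
    kappa R F T x t ≤
      ∑' m : ℕ, Ch * (Real.exp (h - b)) ^ m * (if t ≤ (m : ℝ) * M then 1 else 0) := by
  rw [H.kappa_eq_fiber hx t]
  exact Summable.tsum_le_tsum (fun m => H.fiber_renewal_le hx t m)
    (H.summable_renewal hx t).sigma (H.summable_ind t)

lemma kappa_tail {x : ℕ → A} (hx : x ∈ OneSubshift R) {t : ℝ} (ht : 0 ≤ t) :
    kappa R F T x t ≤ 2 * Ch * Real.exp (-(t * ((b - h) / M))) := by
  have hM0 : (0:ℝ) < M := lt_of_lt_of_le one_pos H.hM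
  have hd0 : (0:ℝ) ≤ b - h := le_trans (Real.log_nonneg one_le_two) H.hlog
  have hCh0 : (0:ℝ) ≤ Ch := le_trans zero_le_one H.hCh
  set q := Real.exp (h - b) with hqdef
  have hq01 : 0 ≤ q := Real.exp_nonneg _
  set n0 := Nat.ceil (t / M) with hn0
  set C' := Ch * Real.exp (-(t * ((b - h) / M))) with hC'
  have hC'0 : 0 ≤ C' := by positivity
  set g : ℕ → ℝ := fun m => if n0 ≤ m then q ^ (m - n0) else 0 with hg
  have hg0 : ∀ m, 0 ≤ g m := fun m => by rw [hg]; dsimp only; split <;> positivity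
  have claim1 : ∀ m : ℕ, Ch * q ^ m * (if t ≤ (m : ℝ) * M then 1 else 0) ≤ C' * g m := by
    intro m
    by_cases hcase : t ≤ (m : ℝ) * M
    · have h1 : t / M ≤ (m : ℝ) := (div_le_iff₀ hM0).2 hcase
      have h2 : n0 ≤ m := Nat.ceil_le.2 h1
      rw [if_pos hcase, mul_one, hg]
      dsimp only
      rw [if_pos h2]
      have h3 : ((m - n0 : ℕ) : ℝ) = (m : ℝ) - (n0 : ℝ) := Nat.cast_sub h2
      have h4 : t / M ≤ (n0 : ℝ) := Nat.le_ceil _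
      rw [hqdef, ← Real.exp_nat_mul, ← Real.exp_nat_mul, hC', mul_assoc, ← Real.exp_add]
      refine mul_le_mul_of_nonneg_left ?_ hCh0
      apply Real.exp_le_exp.2
      rw [h3]
      have h5 : t / M * (b - h) ≤ (n0 : ℝ) * (b - h) := mul_le_mul_of_nonneg_right h4 hd0
      have h6 : t * ((b - h) / M) = t / M * (b - h) := by ring
      nlinarith
    · rw [if_neg hcase, mul_zero]
      exact mul_nonneg hC'0 (hg0 m)
  have hinj : Function.Injective (fun j : ℕ => n0 + j) := fun a c hac => by
    simpa using hac
  have hzero : ∀ m ∉ Set.range (fun j : ℕ => n0 + j), g m = 0 := by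
    intro m hm
    rw [hg]; dsimp only
    rw [if_neg]
    intro hle
    exact hm ⟨m - n0, by show n0 + (m - n0) = m; omega⟩
  have hsupp : Function.support g ⊆ Set.range (fun j : ℕ => n0 + j) := by
    intro m hm
    by_contra hc
    exact hm (hzero m hc)
  have hcomp : (fun j : ℕ => g (n0 + j)) = fun j : ℕ => q ^ j := by
    funext j
    rw [hg]; dsimp only
    rw [if_pos (Nat.le_add_right _ _)]
    congr 1
    omega
  have hsum0 : Summable (fun j : ℕ => q ^ j) := summable_geometric_of_lt_one hq01 H.hq1
  have hsumg : Summable g := (hinj.summable_iff hzero).1 (by rw [show ((g ∘ fun j : ℕ => n0 + j)) = fun j : ℕ => q ^ j from hcomp]; exact hsum0)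
  have htsumg : ∑' m : ℕ, g m = (1 - q)⁻¹ := by
    rw [← hinj.tsum_eq hsupp]
    rw [show (fun j : ℕ => g (n0 + j)) = fun j : ℕ => q ^ j from hcomp]
    exact tsum_geometric_of_lt_one hq01 H.hq1
  have hinv : (1 - q)⁻¹ ≤ 2 := by
    have hhalf : (1:ℝ)/2 ≤ 1 - q := by linarith [H.hq_half]
    have := one_div_le_one_div_of_le (by norm_num : (0:ℝ) < 1/2) hhalf
    rw [one_div, one_div] at this
    simpa using this
  calc kappa R F T x t
      ≤ ∑' m : ℕ, Ch * q ^ m * (if t ≤ (m : ℝ) * M then 1 else 0) := H.kappa_le_tsum hx t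
    _ ≤ ∑' m : ℕ, C' * g m := Summable.tsum_le_tsum claim1 (H.summable_ind t) (hsumg.mul_left C')
    _ = C' * (1 - q)⁻¹ := by rw [tsum_mul_left, htsumg]
    _ ≤ 2 * Ch * Real.exp (-(t * ((b - h) / M))) := by
        rw [hC']
        have hE : (0:ℝ) ≤ Real.exp (-(t * ((b - h) / M))) := Real.exp_nonneg _
        nlinarith

lemma kappa_le_two {x : ℕ → A} (hx : x ∈ OneSubshift R) (t : ℝ) :
    kappa R F T x t ≤ 2 * Ch := by
  have hM0 : (0:ℝ) < M := lt_of_lt_of_le one_pos H.hM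
  have hd0 : (0:ℝ) ≤ b - h := le_trans (Real.log_nonneg one_le_two) H.hlog
  have hCh0 : (0:ℝ) ≤ Ch := le_trans zero_le_one H.hCh
  by_cases ht : 0 ≤ t
  · have h1 := H.kappa_tail hx ht
    have hE : Real.exp (-(t * ((b - h) / M))) ≤ 1 := by
      apply Real.exp_le_one_iff.2  -- check name
      have : 0 ≤ t * ((b - h) / M) := by positivity
      linarith
    nlinarith
  · rw [H.kappa_const hx (le_of_not_ge ht)]
    have h1 := H.kappa_tail hx (le_refl 0)
    simpa using h1


lemma summable_renewal_succ {x : ℕ → A} (hx : x ∈ OneSubshift R) (t : ℝ) :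
    Summable (fun p : Σ m : ℕ, preim R (m + 1) x =>
      renewalTerm F T t (p.1 + 1) p.2.val) := by
  rw [summable_sigma_of_nonneg
    (fun p : (Σ m : ℕ, preim R (m + 1) x) => renewalTerm_nonneg t (p.1 + 1) p.2.val)]
  constructor
  · intro m
    haveI := (H.hfin (m + 1) x).to_subtype
    exact Summable.of_finite
  · refine Summable.of_nonneg_of_le ?_ (fun m => H.fiber_renewal_le' hx t (m + 1)) ?_
    · exact fun m => tsum_nonneg
        (fun y : preim R (m + 1) x => renewalTerm_nonneg t (m + 1) y.val)
    · have heq : (fun m : ℕ => Ch * Real.exp (h - b) ^ (m + 1)) =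
          fun m : ℕ => (Ch * Real.exp (h - b)) * Real.exp (h - b) ^ m := by
        funext m; ring
      rw [heq]
      exact (summable_geometric_of_lt_one (Real.exp_nonneg _) H.hq1).mul_left _

lemma kappa_renewal {x : ℕ → A} (hx : x ∈ OneSubshift R) (t : ℝ) :
    kappa R F T x t = (if t ≤ 0 then 1 else 0) +
      ∑' y : preim R 1 x, Real.exp (-(F y.val)) * kappa R F T y.val (t - T y.val) := by
  rw [H.kappa_eq_fiber hx t,
    Summable.tsum_eq_zero_add ((H.summable_renewal hx t).sigma)]
  congr 1
  · have hx0 : x ∈ preim R 0 x := ⟨hx, rfl⟩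
    rw [tsum_eq_single (⟨x, hx0⟩ : preim R 0 x)
      (by rintro ⟨y, hy⟩ hne
          exact absurd (Subtype.ext (show y = x by simpa using hy.2)) hne)]
    show renewalTerm F T t 0 x = _
    unfold renewalTerm
    rw [birkhoff_zero, birkhoff_zero, neg_zero, Real.exp_zero, one_mul]
  · -- tail: decompose (m+1)-fold preimages
    have hs1 : Summable (fun p : Σ m : ℕ, preim R (m + 1) x =>
        renewalTerm F T t (p.1 + 1) p.2.val) := H.summable_renewal_succ hx t
    set G : (Σ y : preim R 1 x, Σ m : ℕ, preim R m y.val) → ℝ :=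
      fun q => Real.exp (-(F q.1.val)) *
        renewalTerm F T (t - T q.1.val) q.2.1 q.2.2.val with hG
    have hpt : ∀ p : (Σ m : ℕ, preim R (m + 1) x),
        renewalTerm F T t (p.1 + 1) p.2.val = G ((preimSuccEquiv R x) p) := by
      rintro ⟨m, z, hz⟩
      exact renewalTerm_succ F T t m z
    have hGsum : Summable G := by
      rw [← (preimSuccEquiv R x).summable_iff]
      refine Summable.congr hs1 ?_
      exact hpt
    calc ∑' (m : ℕ), ∑' (y : preim R (m + 1) x), renewalTerm F T t (m + 1) y.val
        = ∑' p : (Σ m : ℕ, preim R (m + 1) x), renewalTerm F T t (p.1 + 1) p.2.val :=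
          (Summable.tsum_sigma hs1).symm
      _ = ∑' p : (Σ m : ℕ, preim R (m + 1) x), G ((preimSuccEquiv R x) p) :=
          tsum_congr hpt
      _ = ∑' q, G q := (preimSuccEquiv R x).tsum_eq G
      _ = ∑' (y : preim R 1 x), ∑' (r : Σ m : ℕ, preim R m y.val), G ⟨y, r⟩ :=
          Summable.tsum_sigma hGsum
      _ = ∑' y : preim R 1 x, Real.exp (-(F y.val)) * kappa R F T y.val (t - T y.val) := by
          refine tsum_congr (fun y => ?_)
          rw [hG]
          dsimp only
          rw [tsum_mul_left]
          rfl


lemma rho_lt_one {σ : ℝ} (hσ : σ < (b - h) / M) : Real.exp (σ - (b - h) / M) < 1 := by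
  have := H.hM
  exact Real.exp_lt_one_iff.2 (by linarith)

/-- Pointwise tail bound rewritten with the ratio `ρ`. -/
lemma kappa_tail_rho {x : ℕ → A} (hx : x ∈ OneSubshift R) {t : ℝ} (ht : 0 ≤ t)
    {σ : ℝ} (hσ0 : 0 < σ) :
    kappa R F T x t * Real.exp (σ * t) ≤
      2 * Ch * Real.exp ((σ - (b - h) / M) * t) := by
  have h1 := H.kappa_tail hx ht
  have h2 : kappa R F T x t * Real.exp (σ * t) ≤
      (2 * Ch * Real.exp (-(t * ((b - h) / M)))) * Real.exp (σ * t) :=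
    mul_le_mul_of_nonneg_right h1 (Real.exp_nonneg _)
  refine h2.trans_eq ?_
  rw [mul_assoc, ← Real.exp_add]
  congr 1
  ring

lemma summable_absZ {x : ℕ → A} (hx : x ∈ OneSubshift R) {σ : ℝ}
    (hσ0 : 0 < σ) (hσ : σ < (b - h) / M) :
    Summable (fun t : ℤ => kappa R F T x (t : ℝ) * Real.exp (σ * t)) := by
  apply Summable.of_nat_of_neg_add_one
  · -- positive part
    set ρ := Real.exp (σ - (b - h) / M) with hρ
    refine Summable.of_nonneg_of_le
      (fun n => mul_nonneg (kappa_nonneg _ _) (Real.exp_nonneg _))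
      (fun n => ?_)
      (((summable_geometric_of_lt_one (Real.exp_nonneg _) (H.rho_lt_one hσ))).mul_left (2 * Ch))
    have hcast : (((n : ℤ) : ℝ)) = (n : ℝ) := by push_cast; ring
    rw [hcast]
    have h1 := H.kappa_tail_rho hx (t := (n : ℝ)) (Nat.cast_nonneg n) hσ0
    calc kappa R F T x (n : ℝ) * Real.exp (σ * n)
        ≤ 2 * Ch * Real.exp ((σ - (b - h) / M) * n) := h1
      _ = 2 * Ch * ρ ^ n := by
          rw [hρ, ← Real.exp_nat_mul]
          congr 1
          ring
  · -- negative part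
    have hsum := Summable.mul_left (kappa R F T x 0 * Real.exp (-σ))
      (summable_geometric_of_lt_one (Real.exp_nonneg _)
        (Real.exp_lt_one_iff.2 (by linarith : -σ < 0)))
    refine hsum.congr (fun n => ?_)
    have hle : ((-((n : ℤ) + 1) : ℤ) : ℝ) ≤ 0 := by
      push_cast
      linarith [Nat.cast_nonneg (α := ℝ) n]
    rw [H.kappa_const hx hle, ← Real.exp_nat_mul, mul_assoc, ← Real.exp_add]
    congr 1
    rw [Real.exp_eq_exp]
    push_cast
    ring


lemma summable_normZ {x : ℕ → A} (hx : x ∈ OneSubshift R) {ω : ℂ}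
    (hσ0 : 0 < ω.re) (hσ : ω.re < (b - h) / M) :
    Summable (fun t : ℤ => ‖(kappa R F T x (t : ℝ) : ℂ) * Complex.exp (ω * (t : ℂ))‖) :=
  (H.summable_absZ hx hσ0 hσ).congr
    (fun t => (norm_mul_exp_int _ (kappa_nonneg _ _) ω t).symm)

lemma neg_tsum_eq {x : ℕ → A} (hx : x ∈ OneSubshift R) {ω : ℂ} (hσ0 : 0 < ω.re) :
    (∑' k : ℕ, (kappa R F T x (-(k : ℤ) : ℝ) : ℂ) * Complex.exp (ω * (-(k : ℤ) : ℂ))) =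
      (kappa R F T x 0 : ℂ) / (1 - Complex.exp (-ω)) := by
  have heq : ∀ k : ℕ, (kappa R F T x (-(k : ℤ) : ℝ) : ℂ) * Complex.exp (ω * (-(k : ℤ) : ℂ))
      = (kappa R F T x 0 : ℂ) * (Complex.exp (-ω)) ^ k := by
    intro k
    have hle : -(((k : ℤ)) : ℝ) ≤ 0 := by
      push_cast
      linarith [Nat.cast_nonneg (α := ℝ) k]
    rw [H.kappa_const hx hle, ← Complex.exp_nat_mul]
    congr 1
    push_cast
    ring
  rw [tsum_congr heq, tsum_mul_left,
    tsum_geometric_of_norm_lt_one (norm_exp_neg_lt_one hσ0), div_eq_mul_inv]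

lemma inner_shift {y : ℕ → A} (hy : y ∈ OneSubshift R) (ω : ℂ) :
    (∑' t : ℤ, ((Real.exp (-(F y)) * kappa R F T y ((t : ℝ) - T y) : ℝ) : ℂ) *
      Complex.exp (ω * (t : ℂ)))
    = Complex.exp (ω * (T y : ℂ) - (F y : ℂ)) * kappaHat R F T y ω := by
  obtain ⟨k, hk0, hk⟩ := H.hTk y hy
  have hTc : (T y : ℂ) = (k : ℂ) := by rw [hk]; push_cast; ring
  calc (∑' t : ℤ, ((Real.exp (-(F y)) * kappa R F T y ((t : ℝ) - T y) : ℝ) : ℂ) *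
        Complex.exp (ω * (t : ℂ)))
      = ∑' s : ℤ, ((Real.exp (-(F y)) * kappa R F T y (((s + (k : ℤ) : ℤ) : ℝ) - T y) : ℝ) : ℂ) *
          Complex.exp (ω * ((s + (k : ℤ) : ℤ) : ℂ)) :=
        ((Equiv.addRight ((k : ℤ))).tsum_eq (fun t : ℤ =>
          ((Real.exp (-(F y)) * kappa R F T y ((t : ℝ) - T y) : ℝ) : ℂ) *
            Complex.exp (ω * (t : ℂ)))).symm
    _ = ∑' s : ℤ, Complex.exp (ω * (T y : ℂ) - (F y : ℂ)) *
          ((kappa R F T y (s : ℝ) : ℂ) * Complex.exp (ω * (s : ℂ))) := by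
        refine tsum_congr (fun s => ?_)
        have hre : (((s + (k : ℤ) : ℤ) : ℝ)) - T y = (s : ℝ) := by
          rw [hk]; push_cast; ring
        rw [hre]
        rw [Complex.ofReal_mul, Complex.ofReal_exp]
        have hexp : Complex.exp (ω * (T y : ℂ) - (F y : ℂ)) =
            Complex.exp (ω * (k : ℂ)) * Complex.exp (-(F y : ℂ)) := by
          rw [hTc, sub_eq_add_neg, Complex.exp_add]
        have hexp2 : Complex.exp (ω * ((s + (k : ℤ) : ℤ) : ℂ)) =
            Complex.exp (ω * (s : ℂ)) * Complex.exp (ω * (k : ℂ)) := by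
          rw [← Complex.exp_add]
          congr 1
          push_cast
          ring
        rw [hexp, hexp2, Complex.ofReal_neg]
        ring
    _ = Complex.exp (ω * (T y : ℂ) - (F y : ℂ)) * kappaHat R F T y ω := by
        rw [tsum_mul_left]
        rfl


lemma kappaHat_renewal {x : ℕ → A} (hx : x ∈ OneSubshift R) {ω : ℂ}
    (hσ0 : 0 < ω.re) (hσ : ω.re < (b - h) / M) :
    kappaHat R F T x ω = 1 / (1 - Complex.exp (-ω)) +
      ∑' z : preim R 1 x,
        Complex.exp (ω * (T z.val : ℂ) - (F z.val : ℂ)) * kappaHat R F T z.val ω := by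
  classical
  haveI : Finite (preim R 1 x) := (H.hfin 1 x).to_subtype
  set u : ℤ → ℂ := fun t =>
    (((if (t : ℝ) ≤ 0 then (1 : ℝ) else 0) : ℝ) : ℂ) * Complex.exp (ω * (t : ℂ)) with hu
  set w : (preim R 1 x) → ℤ → ℂ := fun y t =>
    ((Real.exp (-(F y.val)) * kappa R F T y.val ((t : ℝ) - T y.val) : ℝ) : ℂ) *
      Complex.exp (ω * (t : ℂ)) with hw
  have hymem : ∀ y : preim R 1 x, y.val ∈ OneSubshift R := fun y => y.2.1
  -- summability of the double family w
  have hslice : ∀ y : preim R 1 x, Summable (fun t : ℤ => ‖w y t‖) := by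
    intro y
    obtain ⟨k, hk0, hk⟩ := H.hTk y.val (hymem y)
    have hnormeq : ∀ t : ℤ, ‖w y t‖ =
        (Real.exp (-(F y.val)) * kappa R F T y.val ((t : ℝ) - T y.val)) *
          Real.exp (ω.re * t) := by
      intro t
      rw [hw]
      exact norm_mul_exp_int _ (mul_nonneg (Real.exp_nonneg _) (kappa_nonneg _ _)) ω t
    have hbase := (H.summable_absZ (hymem y) hσ0 hσ).mul_left
      (Real.exp (-(F y.val)) * Real.exp (ω.re * k))
    have hcomp := ((Equiv.subRight (k : ℤ)).summable_iff
      (f := fun s : ℤ => (Real.exp (-(F y.val)) * Real.exp (ω.re * k)) *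
        (kappa R F T y.val (s : ℝ) * Real.exp (ω.re * s)))).2 hbase
    refine hcomp.congr (fun t => ?_)
    show (Real.exp (-(F y.val)) * Real.exp (ω.re * k)) *
        (kappa R F T y.val (((t - (k : ℤ) : ℤ)) : ℝ) *
          Real.exp (ω.re * (((t - (k : ℤ) : ℤ)) : ℝ))) = ‖w y t‖
    rw [hnormeq t]
    have h1 : (((t - (k : ℤ) : ℤ)) : ℝ) = (t : ℝ) - T y.val := by
      rw [hk]; push_cast; ring
    rw [h1]
    have h2 : Real.exp (ω.re * k) * Real.exp (ω.re * ((t : ℝ) - T y.val)) =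
        Real.exp (ω.re * t) := by
      rw [← Real.exp_add, hk]
      congr 1
      ring
    rw [← h2]
    ring
  have hnormsum : Summable (fun p : (preim R 1 x) × ℤ => ‖w p.1 p.2‖) := by
    apply (summable_prod_of_nonneg (fun p => norm_nonneg _)).2
    exact ⟨hslice, Summable.of_finite⟩
  have hwsum : Summable (fun p : (preim R 1 x) × ℤ => w p.1 p.2) :=
    Summable.of_norm hnormsum
  have hvsum : Summable (fun t : ℤ => ∑' y : preim R 1 x, w y t) := hwsum.prod_symm.prod
  -- pointwise renewal equation, complexified
  have hpt : ∀ t : ℤ, (kappa R F T x (t : ℝ) : ℂ) * Complex.exp (ω * (t : ℂ)) =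
      u t + ∑' y : preim R 1 x, w y t := by
    intro t
    rw [hu, hw]
    dsimp only
    rw [H.kappa_renewal hx (t : ℝ), Complex.ofReal_add, Complex.ofReal_tsum, add_mul,
      tsum_mul_right]
  -- summability and value of ∑ u
  have hnat : Summable (fun n : ℕ => u ((n : ℤ))) := by
    apply summable_of_ne_finset_zero (s := ({0} : Finset ℕ))
    intro n hn
    have hpos : (0 : ℝ) < n := by
      have : 0 < n := Nat.pos_of_ne_zero (by simpa using hn)
      exact_mod_cast this
    have hneg : ¬ (((n : ℤ) : ℝ) ≤ 0) := by push_cast; linarith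
    rw [hu]
    dsimp only
    rw [if_neg hneg, Complex.ofReal_zero, zero_mul]
  have hnegpt : ∀ n : ℕ, u (-((n : ℤ) + 1)) =
      Complex.exp (-ω) * (Complex.exp (-ω)) ^ n := by
    intro n
    rw [hu]
    dsimp only
    have hle : ((-((n : ℤ) + 1) : ℤ) : ℝ) ≤ 0 := by
      push_cast
      linarith [Nat.cast_nonneg (α := ℝ) n]
    rw [if_pos hle, Complex.ofReal_one, one_mul, ← pow_succ', ← Complex.exp_nat_mul]
    congr 1
    push_cast
    ring
  have hneg : Summable (fun n : ℕ => u (-((n : ℤ) + 1))) := by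
    refine ((summable_geometric_of_norm_lt_one
      (norm_exp_neg_lt_one hσ0)).mul_left (Complex.exp (-ω))).congr (fun n => ?_)
    exact (hnegpt n).symm
  have husum : Summable u := Summable.of_nat_of_neg_add_one hnat hneg
  have hutsum : ∑' t : ℤ, u t = 1 / (1 - Complex.exp (-ω)) := by
    rw [tsum_of_nat_of_neg_add_one hnat hneg]
    have h01 : (∑' n : ℕ, u ((n : ℤ))) = 1 := by
      rw [tsum_eq_single 0 ?_]
      · rw [hu]
        dsimp only
        norm_num
      · intro n hn
        have hpos : (0 : ℝ) < n := by
          have : 0 < n := Nat.pos_of_ne_zero (by simpa using hn)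
          exact_mod_cast this
        have hneg' : ¬ (((n : ℤ) : ℝ) ≤ 0) := by push_cast; linarith
        rw [hu]
        dsimp only
        rw [if_neg hneg', Complex.ofReal_zero, zero_mul]
    have h02 : (∑' n : ℕ, u (-((n : ℤ) + 1))) =
        Complex.exp (-ω) * (1 - Complex.exp (-ω))⁻¹ := by
      rw [tsum_congr hnegpt, tsum_mul_left,
        tsum_geometric_of_norm_lt_one (norm_exp_neg_lt_one hσ0)]
    rw [h01, h02]
    have hne := one_sub_exp_neg_ne_zero hσ0
    field_simp
    ring
  -- assemble
  calc kappaHat R F T x ω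
      = ∑' t : ℤ, ((kappa R F T x (t : ℝ) : ℂ) * Complex.exp (ω * (t : ℂ))) := rfl
    _ = ∑' t : ℤ, (u t + ∑' y : preim R 1 x, w y t) := tsum_congr hpt
    _ = (∑' t : ℤ, u t) + ∑' t : ℤ, ∑' y : preim R 1 x, w y t := Summable.tsum_add husum hvsum
    _ = 1 / (1 - Complex.exp (-ω)) + ∑' y : preim R 1 x, ∑' t : ℤ, w y t := by
        have hwsum' : Summable (Function.uncurry w) := hwsum
        rw [hutsum, Summable.tsum_comm (f := w) hwsum']
    _ = 1 / (1 - Complex.exp (-ω)) +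
        ∑' z : preim R 1 x,
          Complex.exp (ω * (T z.val : ℂ) - (F z.val : ℂ)) * kappaHat R F T z.val ω := by
        have hinner := tsum_congr (L := SummationFilter.unconditional _) (fun y : preim R 1 x => H.inner_shift (hymem y) ω)
        rw [hinner]


lemma tail_bound {x : ℕ → A} (hx : x ∈ OneSubshift R) {ω : ℂ}
    (hσ0 : 0 < ω.re) (hσ : ω.re < (b - h) / M) :
    (∑' k : ℕ, ‖(kappa R F T x ((k : ℝ) + 1) : ℂ) * Complex.exp (ω * ((k : ℂ) + 1))‖) ≤
      2 * Ch / (1 - Real.exp (ω.re - (b - h) / M)) := by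
  have hCh0 : (0:ℝ) ≤ Ch := le_trans zero_le_one H.hCh
  set ρ := Real.exp (ω.re - (b - h) / M) with hρ
  have hρ0 : 0 ≤ ρ := Real.exp_nonneg _
  have hρ1 : ρ < 1 := H.rho_lt_one hσ
  have hterm : ∀ k : ℕ,
      ‖(kappa R F T x ((k : ℝ) + 1) : ℂ) * Complex.exp (ω * ((k : ℂ) + 1))‖
      = kappa R F T x ((k : ℝ) + 1) * Real.exp (ω.re * ((k : ℝ) + 1)) := by
    intro k
    have hc : ((k : ℂ) + 1) = ((((k : ℝ) + 1 : ℝ)) : ℂ) := by push_cast; ring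
    rw [hc]
    exact norm_mul_exp _ (kappa_nonneg _ _) ω _
  have hbound : ∀ k : ℕ, kappa R F T x ((k : ℝ) + 1) * Real.exp (ω.re * ((k : ℝ) + 1)) ≤
      (2 * Ch * ρ) * ρ ^ k := by
    intro k
    have h1 := H.kappa_tail_rho hx (t := (k : ℝ) + 1) (by positivity) hσ0
    refine h1.trans_eq ?_
    have h2 : Real.exp ((ω.re - (b - h) / M) * ((k : ℝ) + 1)) = ρ * ρ ^ k := by
      rw [hρ, ← Real.exp_nat_mul, ← Real.exp_add]
      congr 1
      ring
    rw [h2]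
    ring
  have hsumL : Summable (fun k : ℕ =>
      kappa R F T x ((k : ℝ) + 1) * Real.exp (ω.re * ((k : ℝ) + 1))) :=
    Summable.of_nonneg_of_le
      (fun k => mul_nonneg (kappa_nonneg _ _) (Real.exp_nonneg _)) hbound
      ((summable_geometric_of_lt_one hρ0 hρ1).mul_left _)
  calc (∑' k : ℕ, ‖(kappa R F T x ((k : ℝ) + 1) : ℂ) * Complex.exp (ω * ((k : ℂ) + 1))‖)
      = ∑' k : ℕ, kappa R F T x ((k : ℝ) + 1) * Real.exp (ω.re * ((k : ℝ) + 1)) :=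
        tsum_congr hterm
    _ ≤ ∑' k : ℕ, (2 * Ch * ρ) * ρ ^ k :=
        Summable.tsum_le_tsum hbound hsumL ((summable_geometric_of_lt_one hρ0 hρ1).mul_left _)
    _ = (2 * Ch * ρ) * (1 - ρ)⁻¹ := by
        rw [tsum_mul_left, tsum_geometric_of_lt_one hρ0 hρ1]
    _ ≤ 2 * Ch / (1 - ρ) := by
        rw [div_eq_mul_inv]
        have hinv0 : 0 ≤ (1 - ρ)⁻¹ := inv_nonneg.2 (by linarith)
        have : 2 * Ch * ρ ≤ 2 * Ch := by nlinarith
        exact mul_le_mul_of_nonneg_right this hinv0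

end Hyp

theorem stmt7 [Fintype A] [Nonempty A] (R : A → A → Prop)
    (hXne : (OneSubshift R).Nonempty)
    (hsurj : ∀ x ∈ OneSubshift R, ∃ y ∈ OneSubshift R, shiftN y = x)
    (F T : (ℕ → A) → ℝ) (Ch h : ℝ) (hCh : 1 ≤ Ch) (hh : 0 ≤ h)
    (hfin : ∀ (m : ℕ) (x : ℕ → A), (preim R m x).Finite)
    (hcard : ∀ (m : ℕ), ∀ x ∈ OneSubshift R,
      (Nat.card (preim R m x) : ℝ) ≤ Ch * Real.exp (m * h))
    (hTint : ∀ x ∈ OneSubshift R, ∃ k : ℕ, 0 < k ∧ T x = (k : ℝ))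
    (hTbdd : BddAbove (T '' OneSubshift R))
    (hF : h + Real.log 2 ≤ sInf (F '' OneSubshift R)) :
    (∀ x ∈ OneSubshift R, ∀ ω : ℂ, 0 < ω.re →
      ω.re < (sInf (F '' OneSubshift R) - h) / sSup (T '' OneSubshift R) →
      -- κ^x is constant on the nonpositive integers
      (∀ t : ℤ, t ≤ 0 → kappa R F T x (t : ℝ) = kappa R F T x 0) ∧
      -- absolute convergence of the Fourier–Laplace transform
      Summable (fun t : ℤ =>
        ‖(kappa R F T x (t : ℝ) : ℂ) * Complex.exp (ω * (t : ℂ))‖) ∧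
      -- the sum over t ≤ 0
      (∑' k : ℕ, (kappa R F T x (-(k : ℤ) : ℝ) : ℂ) *
          Complex.exp (ω * (-(k : ℤ) : ℂ))) =
        (kappa R F T x 0 : ℂ) / (1 - Complex.exp (-ω)) ∧
      -- the transformed renewal equation
      kappaHat R F T x ω = 1 / (1 - Complex.exp (-ω)) +
        ∑' z : preim R 1 x,
          Complex.exp (ω * (T z.val : ℂ) - (F z.val : ℂ)) *
            kappaHat R F T z.val ω) ∧
    -- the tail sum over t ≥ 1 is bounded by C/(1 − e^{Re ω − ω⁻})
    ∃ C > (0 : ℝ), ∀ x ∈ OneSubshift R, ∀ ω : ℂ, 0 < ω.re →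
      ω.re < (sInf (F '' OneSubshift R) - h) / sSup (T '' OneSubshift R) →
      (∑' k : ℕ, ‖(kappa R F T x ((k : ℝ) + 1) : ℂ) *
          Complex.exp (ω * ((k : ℂ) + 1))‖) ≤
        C / (1 - Real.exp (ω.re -
          (sInf (F '' OneSubshift R) - h) / sSup (T '' OneSubshift R))) := by
  have hlog2 : (0:ℝ) < Real.log 2 := Real.log_pos (by norm_num)
  set b := sInf (F '' OneSubshift R) with hb
  set M := sSup (T '' OneSubshift R) with hM
  have hFbdd : BddBelow (F '' OneSubshift R) := by
    by_contra hc
    have h0 : b = 0 := by rw [hb]; exact Real.sInf_of_not_bddBelow hc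
    linarith
  have hFb : ∀ y ∈ OneSubshift R, b ≤ F y := fun y hy => csInf_le hFbdd ⟨y, hy, rfl⟩
  have hT1 : ∀ y ∈ OneSubshift R, 1 ≤ T y := by
    intro y hy
    obtain ⟨k, hk0, hk⟩ := hTint y hy
    rw [hk]
    exact_mod_cast hk0
  have hTM : ∀ y ∈ OneSubshift R, T y ≤ M := fun y hy => le_csSup hTbdd ⟨y, hy, rfl⟩
  have hM1 : 1 ≤ M := by
    obtain ⟨x0, hx0⟩ := hXne
    exact le_trans (hT1 x0 hx0) (hTM x0 hx0)
  have H : Hyp R F T b M Ch h :=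
    ⟨hfin, hcard, hFb, hTM, hT1, hM1, hCh, hh, by linarith, hTint⟩
  constructor
  · intro x hx ω hσ0 hσ
    refine ⟨?_, ?_, ?_, ?_⟩
    · intro t ht
      exact H.kappa_const hx (by exact_mod_cast ht)
    · exact H.summable_normZ hx hσ0 hσ
    · exact H.neg_tsum_eq hx hσ0
    · exact H.kappaHat_renewal hx hσ0 hσ
  · exact ⟨2 * Ch, by linarith, fun x hx ω hσ0 hσ => H.tail_bound hx hσ0 hσ⟩
end

section
/- For every energy threshold E_th > 0 there exists a virial radius R_vir ≥ R_0 such that for all E ≥ E_th and all q ∈ ℝ³ with ‖q‖ ≥ R_vir, the virial inequality 2·(E − V(q)) + ⟨q, ∇V(q)⟩ ≥ E holds. -/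
/-! Statement 8: existence of a virial radius for Coulombic (short-range perturbed
Kepler) potentials: outside it the virial inequality `2(E − V(q)) + ⟨q, ∇V(q)⟩ ≥ E`
holds for all energies `E ≥ E_th`. -/

theorem stmt8
    (V : EuclideanSpace ℝ (Fin 3) → ℝ) (S : Set (EuclideanSpace ℝ (Fin 3)))
    (hSfin : S.Finite)
    (Zinf ε C₁ R₀ : ℝ) (hε : 0 < ε ∧ ε ≤ 1) (hC₁ : 0 < C₁) (hR₀ : 0 < R₀)
    (hSball : ∀ s ∈ S, ‖s‖ < R₀ / 2)
    (hdiff : ∀ q ∉ S, ContDiffAt ℝ 1 V q)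
    (hV0 : Filter.Tendsto V (Filter.cocompact (EuclideanSpace ℝ (Fin 3))) (nhds 0))
    (hgrad : ∀ q : EuclideanSpace ℝ (Fin 3), R₀ ≤ ‖q‖ →
      ‖gradient V q - (Zinf / ‖q‖ ^ 3) • q‖ ≤ C₁ * R₀ / ‖q‖ ^ (2 + ε)) :
    ∀ Eth > (0 : ℝ), ∃ Rvir ≥ R₀, ∀ E ≥ Eth, ∀ q : EuclideanSpace ℝ (Fin 3),
      Rvir ≤ ‖q‖ → E ≤ 2 * (E - V q) + (inner ℝ q (gradient V q) : ℝ) := by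
  intro Eth hEth
  -- V is eventually small
  have hsmall : ∀ᶠ q in Filter.cocompact (EuclideanSpace ℝ (Fin 3)),
      dist (V q) 0 < Eth / 4 := Metric.tendsto_nhds.mp hV0 (Eth / 4) (by positivity)
  obtain ⟨K, hKc, hKsub⟩ := Filter.mem_cocompact.mp hsmall
  obtain ⟨r, hr⟩ := hKc.isBounded.subset_closedBall 0
  set Rvir : ℝ := max (max R₀ (|r| + 1)) (max 1 (2 * (C₁ * R₀ + |Zinf|) / Eth)) with hRvir
  refine ⟨Rvir, le_trans (le_max_left _ _) (le_max_left _ _), ?_⟩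
  intro E hE q hq
  have hqR₀ : R₀ ≤ ‖q‖ := le_trans (le_trans (le_max_left _ _) (le_max_left _ _)) hq
  have hq1 : (1 : ℝ) ≤ ‖q‖ := le_trans (le_trans (le_max_left _ _) (le_max_right _ _)) hq
  have hqpos : (0 : ℝ) < ‖q‖ := lt_of_lt_of_le one_pos hq1
  have hqZ : 2 * (C₁ * R₀ + |Zinf|) / Eth ≤ ‖q‖ :=
    le_trans (le_trans (le_max_right _ _) (le_max_right _ _)) hq
  -- V q is small
  have hVq : |V q| < Eth / 4 := by
    have hqK : q ∉ K := by
      intro hqK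
      have := hr hqK
      have h2 : ‖q‖ ≤ |r| := by
        have := mem_closedBall_zero_iff.mp this
        exact le_trans this (le_abs_self r)
      have h3 : |r| + 1 ≤ ‖q‖ :=
        le_trans (le_trans (le_max_right _ _) (le_max_left _ _)) hq
      linarith
    have := hKsub hqK
    simpa [Real.dist_eq] using this
  -- bound on the radial part
  set g := gradient V q
  set s := Zinf / ‖q‖ ^ 3
  have hinner : (inner ℝ q g : ℝ) = inner ℝ q (g - s • q) + Zinf / ‖q‖ := by
    rw [inner_sub_right, real_inner_smul_right, real_inner_self_eq_norm_sq]
    have : s * ‖q‖ ^ 2 = Zinf / ‖q‖ := by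
      field_simp [s]
      simp only [s]; field_simp
    linarith [this]
  have hCS : |(inner ℝ q (g - s • q) : ℝ)| ≤ ‖q‖ * ‖g - s • q‖ := abs_real_inner_le_norm _ _
  have hrpow : ‖q‖ ^ (2 : ℝ) ≤ ‖q‖ ^ (2 + ε) :=
    Real.rpow_le_rpow_of_exponent_le hq1 (by linarith [hε.1])
  have hrpow2 : (‖q‖ : ℝ) ^ (2 : ℝ) = ‖q‖ ^ (2 : ℕ) := by
    rw [← Real.rpow_natCast ‖q‖ 2]; norm_num
  have hterm : ‖q‖ * ‖g - s • q‖ ≤ C₁ * R₀ / ‖q‖ := by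
    have h1 := hgrad q hqR₀
    have h2 : C₁ * R₀ / ‖q‖ ^ (2 + ε) ≤ C₁ * R₀ / ‖q‖ ^ (2 : ℕ) := by
      apply div_le_div_of_nonneg_left (by positivity) (by positivity)
      rw [← hrpow2]; exact hrpow
    have h3 : ‖g - s • q‖ ≤ C₁ * R₀ / ‖q‖ ^ (2 : ℕ) := le_trans h1 h2
    calc ‖q‖ * ‖g - s • q‖ ≤ ‖q‖ * (C₁ * R₀ / ‖q‖ ^ (2 : ℕ)) := by
          exact mul_le_mul_of_nonneg_left h3 (le_of_lt hqpos)
      _ = C₁ * R₀ / ‖q‖ := by field_simp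
  have hZq : |Zinf| / ‖q‖ ≤ |Zinf| / ‖q‖ := le_refl _
  have hsum : (C₁ * R₀ + |Zinf|) / ‖q‖ ≤ Eth / 2 := by
    rw [div_le_iff₀ hqpos]
    have : Eth / 2 * (2 * (C₁ * R₀ + |Zinf|) / Eth) = C₁ * R₀ + |Zinf| := by
      field_simp
    nlinarith [mul_le_mul_of_nonneg_left hqZ (by linarith : (0:ℝ) ≤ Eth / 2)]
  have hinnerlb : -(Eth / 2) ≤ (inner ℝ q g : ℝ) := by
    have h1 : -(‖q‖ * ‖g - s • q‖) ≤ (inner ℝ q (g - s • q) : ℝ) := neg_le_of_abs_le hCS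
    have h2 : -(C₁ * R₀ / ‖q‖) ≤ (inner ℝ q (g - s • q) : ℝ) := by
      have := hterm; linarith
    have h3 : -(|Zinf| / ‖q‖) ≤ Zinf / ‖q‖ := by
      rw [← neg_div]
      exact (div_le_div_iff_of_pos_right hqpos).mpr (neg_abs_le Zinf)
    have h4 : C₁ * R₀ / ‖q‖ + |Zinf| / ‖q‖ = (C₁ * R₀ + |Zinf|) / ‖q‖ := by ring
    rw [hinner]
    linarith
  have hEEth : Eth ≤ E := hE
  have h2V : 2 * V q ≤ Eth / 2 := by
    have := abs_lt.mp hVq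
    linarith [this.2]
  linarith
end

section
/- For every c > 0 there exist C' > 0 and E_0 ≥ 1 such that for all E ≥ E_0 the following holds: if w¹ = (y¹, z¹) and w² = (y², z²) in ℝ² × ℝ² ≅ ℝ⁴ are orthonormal vectors each lying in the cone {(y,z) : ‖y − z‖ ≤ (c/E)·‖y + z‖}, then the Jacobian of the projection to the z-plane satisfies |√(‖z¹‖²·‖z²‖² − ⟨z¹, z²⟩²) − 1/2| ≤ C'/E. In particular, along the way: |‖z^i‖² − 1/2| ≤ c/E for i = 1,2, ⟨y¹, y²⟩ = −⟨z¹, z²⟩, and |⟨z¹, z²⟩| = O(1/E). -/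
/-! Statement 10: Jacobian estimate for the projection of a cone-adapted 2-plane in
`ℝ⁴ ≅ ℝ² × ℝ²` to the `z`-plane. Points of `ℝ⁴` are written as pairs `(y, z)` with
`y, z ∈ ℝ²`; orthonormality of `w¹ = (y¹,z¹)`, `w² = (y²,z²)` is expressed through
the component identities `‖yⁱ‖² + ‖zⁱ‖² = 1` and `⟨y¹,y²⟩ + ⟨z¹,z²⟩ = 0`. -/

set_option maxHeartbeats 2000000

lemma sqrt_near (x : ℝ) : |Real.sqrt x - 1/2| ≤ 2 * |x - 1/4| := by
  rcases le_or_gt x 0 with hx | hx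
  · rw [Real.sqrt_eq_zero_of_nonpos hx]
    rcases abs_cases ((0:ℝ) - 1/2) with ⟨h, _⟩ | ⟨h, _⟩ <;>
      rcases abs_cases (x - 1/4) with ⟨h2, _⟩ | ⟨h2, _⟩ <;> nlinarith
  · have h1 := Real.sq_sqrt hx.le
    have h2 := Real.sqrt_nonneg x
    rcases abs_cases (Real.sqrt x - 1/2) with ⟨h, _⟩ | ⟨h, _⟩ <;>
      rcases abs_cases (x - 1/4) with ⟨h3, _⟩ | ⟨h3, _⟩ <;> nlinarith

lemma jac_bound (a b p c iE : ℝ) (hc : 0 < c) (hiE : 0 < iE) (hiE1 : iE ≤ 1)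
    (ha : |a - 1/2| ≤ c * iE) (hb : |b - 1/2| ≤ c * iE)
    (hp : |p| ≤ (2*c + 2*c^2) * iE) :
    |Real.sqrt (a * b - p^2) - 1/2|
      ≤ (2*(c^2 + c + (2*c+2*c^2)^2) + (2*c+2*c^2) + 1) * iE := by
  have ha' := abs_le.mp ha
  have hb' := abs_le.mp hb
  have hp' := abs_le.mp hp
  have hp2 : p^2 ≤ (2*c+2*c^2)^2 * iE := by
    have h1 : p^2 ≤ ((2*c+2*c^2) * iE)^2 := sq_le_sq' hp'.1 hp'.2
    nlinarith [mul_nonneg (mul_nonneg (sq_nonneg (2*c+2*c^2)) hiE.le) (sub_nonneg.mpr hiE1)]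
  have hab : |(a - 1/2) * (b - 1/2)| ≤ c^2 * iE := by
    rw [abs_mul]
    calc |a - 1/2| * |b - 1/2| ≤ (c * iE) * (c * iE) := by
          exact mul_le_mul ha hb (abs_nonneg _) (by positivity)
      _ ≤ c^2 * iE := by nlinarith [mul_nonneg (mul_nonneg (sq_nonneg c) hiE.le) (sub_nonneg.mpr hiE1)]
  have hab' := abs_le.mp hab
  have hmid : |a * b - p^2 - 1/4| ≤ (c^2 + c + (2*c+2*c^2)^2) * iE := by
    rw [abs_le]
    constructor <;> nlinarith [sq_nonneg p, hab'.1, hab'.2, ha'.1, ha'.2, hb'.1, hb'.2,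
      mul_nonneg (mul_nonneg hc.le hc.le) hiE.le]
  calc |Real.sqrt (a * b - p^2) - 1/2| ≤ 2 * |a * b - p^2 - 1/4| := sqrt_near _
    _ ≤ 2 * ((c^2 + c + (2*c+2*c^2)^2) * iE) := by linarith
    _ ≤ (2*(c^2 + c + (2*c+2*c^2)^2) + (2*c+2*c^2) + 1) * iE := by nlinarith [sq_nonneg (2*c+2*c^2)]

theorem stmt10 :
    ∀ c > (0 : ℝ), ∃ C' > (0 : ℝ), ∃ E₀ : ℝ, 1 ≤ E₀ ∧
      ∀ E ≥ E₀, ∀ y1 z1 y2 z2 : EuclideanSpace ℝ (Fin 2),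
        -- w¹ = (y¹,z¹) and w² = (y²,z²) are orthonormal in ℝ⁴
        ‖y1‖ ^ 2 + ‖z1‖ ^ 2 = 1 →
        ‖y2‖ ^ 2 + ‖z2‖ ^ 2 = 1 →
        (inner ℝ y1 y2 : ℝ) + (inner ℝ z1 z2 : ℝ) = 0 →
        -- both lie in the cone
        ‖y1 - z1‖ ≤ (c / E) * ‖y1 + z1‖ →
        ‖y2 - z2‖ ≤ (c / E) * ‖y2 + z2‖ →
        -- the Jacobian of the projection to the z-plane is 1/2 + O(1/E)
        |Real.sqrt (‖z1‖ ^ 2 * ‖z2‖ ^ 2 - (inner ℝ z1 z2 : ℝ) ^ 2) - 1 / 2| ≤ C' / E ∧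
        -- intermediate estimates
        |‖z1‖ ^ 2 - 1 / 2| ≤ c / E ∧
        |‖z2‖ ^ 2 - 1 / 2| ≤ c / E ∧
        (inner ℝ y1 y2 : ℝ) = -(inner ℝ z1 z2 : ℝ) ∧
        |(inner ℝ z1 z2 : ℝ)| ≤ C' / E := by
  intro c hc
  refine ⟨2*(c^2 + c + (2*c+2*c^2)^2) + (2*c+2*c^2) + 1, by positivity, 1, le_refl 1, ?_⟩
  intro E hE y1 z1 y2 z2 h1 h2 horth hcone1 hcone2
  have hE0 : (0:ℝ) < E := lt_of_lt_of_le one_pos hE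
  have hcE : 0 ≤ c / E := by positivity
  -- basic norm bounds
  have hny1 : ‖y1‖ ≤ 1 := by nlinarith [norm_nonneg y1, norm_nonneg z1]
  have hnz1 : ‖z1‖ ≤ 1 := by nlinarith [norm_nonneg y1, norm_nonneg z1]
  have hny2 : ‖y2‖ ≤ 1 := by nlinarith [norm_nonneg y2, norm_nonneg z2]
  have hnz2 : ‖z2‖ ≤ 1 := by nlinarith [norm_nonneg y2, norm_nonneg z2]
  -- sums are small
  have hs1 : ‖y1 + z1‖^2 ≤ 2 := by
    nlinarith [norm_add_sq_real y1 z1, real_inner_le_norm y1 z1, sq_nonneg (‖y1‖ - ‖z1‖)]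
  have hs2 : ‖y2 + z2‖^2 ≤ 2 := by
    nlinarith [norm_add_sq_real y2 z2, real_inner_le_norm y2 z2, sq_nonneg (‖y2‖ - ‖z2‖)]
  have hsn1 : ‖y1 + z1‖ ≤ 2 := by nlinarith [norm_nonneg (y1 + z1)]
  have hsn2 : ‖y2 + z2‖ ≤ 2 := by nlinarith [norm_nonneg (y2 + z2)]
  have hd1 : ‖y1 - z1‖ ≤ 2 * c / E := by
    calc ‖y1 - z1‖ ≤ (c/E) * ‖y1 + z1‖ := hcone1
    _ ≤ (c/E) * 2 := mul_le_mul_of_nonneg_left hsn1 hcE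
    _ = 2 * c / E := by ring
  have hd2 : ‖y2 - z2‖ ≤ 2 * c / E := by
    calc ‖y2 - z2‖ ≤ (c/E) * ‖y2 + z2‖ := hcone2
    _ ≤ (c/E) * 2 := mul_le_mul_of_nonneg_left hsn2 hcE
    _ = 2 * c / E := by ring
  -- key estimate on ‖zᵢ‖²
  have e1 : (inner ℝ (y1 - z1) (y1 + z1) : ℝ) = ‖y1‖^2 - ‖z1‖^2 := by
    simp only [inner_sub_left, inner_add_right, real_inner_self_eq_norm_sq,
      real_inner_comm z1 y1]
    ring
  have e2 : (inner ℝ (y2 - z2) (y2 + z2) : ℝ) = ‖y2‖^2 - ‖z2‖^2 := by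
    simp only [inner_sub_left, inner_add_right, real_inner_self_eq_norm_sq,
      real_inner_comm z2 y2]
    ring
  have key1 : |‖z1‖^2 - 1/2| ≤ c / E := by
    have cs := abs_real_inner_le_norm (y1 - z1) (y1 + z1)
    rw [e1] at cs
    have h3 : ‖y1 - z1‖ * ‖y1 + z1‖ ≤ (c/E) * ‖y1+z1‖^2 := by
      nlinarith [norm_nonneg (y1 + z1)]
    rw [abs_le] at cs ⊢
    constructor <;> nlinarith
  have key2 : |‖z2‖^2 - 1/2| ≤ c / E := by
    have cs := abs_real_inner_le_norm (y2 - z2) (y2 + z2)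
    rw [e2] at cs
    have h3 : ‖y2 - z2‖ * ‖y2 + z2‖ ≤ (c/E) * ‖y2+z2‖^2 := by
      nlinarith [norm_nonneg (y2 + z2)]
    rw [abs_le] at cs ⊢
    constructor <;> nlinarith
  -- inner ℝ product bound
  have expand : (inner ℝ y1 y2 : ℝ) = inner ℝ z1 z2 + inner ℝ z1 (y2 - z2)
      + inner ℝ (y1 - z1) z2 + (inner ℝ (y1 - z1) (y2 - z2) : ℝ) := by
    simp only [inner_sub_left, inner_sub_right]
    ring
  have cs1 := abs_le.mp (abs_real_inner_le_norm z1 (y2 - z2))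
  have cs2 := abs_le.mp (abs_real_inner_le_norm (y1 - z1) z2)
  have cs3 := abs_le.mp (abs_real_inner_le_norm (y1 - z1) (y2 - z2))
  have hdz1 : ‖z1‖ * ‖y2 - z2‖ ≤ 2*c/E := by
    nlinarith [norm_nonneg (y2 - z2), norm_nonneg z1]
  have hdz2 : ‖y1 - z1‖ * ‖z2‖ ≤ 2*c/E := by
    nlinarith [norm_nonneg (y1 - z1), norm_nonneg z2]
  have hdd : ‖y1 - z1‖ * ‖y2 - z2‖ ≤ 4*c^2/E := by
    have : (2*c/E) * (2*c/E) ≤ 4*c^2/E := by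
      rw [div_mul_div_comm, div_le_div_iff₀ (by positivity) hE0]
      nlinarith [mul_le_mul_of_nonneg_left hE (by positivity : (0:ℝ) ≤ 4*c^2*E)]
    nlinarith [norm_nonneg (y1 - z1), norm_nonneg (y2 - z2)]
  have hp : |(inner ℝ z1 z2 : ℝ)| ≤ (2*c + 2*c^2) / E := by
    rw [abs_le]
    have hsplit : (2*c + 2*c^2) / E = 2*c/E + (4*c^2/E)/2 := by ring
    constructor <;> rw [hsplit] <;>
      linarith [cs1.1, cs1.2, cs2.1, cs2.2, cs3.1, cs3.2, hdd]
  have hiE : (0:ℝ) < E⁻¹ := by positivity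
  have hiE1 : E⁻¹ ≤ 1 := by
    rw [inv_le_one_iff₀]; right; exact hE
  have hjac := jac_bound (‖z1‖^2) (‖z2‖^2) (inner ℝ z1 z2 : ℝ) c E⁻¹ hc hiE hiE1
    (by rw [← div_eq_mul_inv]; exact key1) (by rw [← div_eq_mul_inv]; exact key2)
    (by rw [← div_eq_mul_inv]; exact hp)
  rw [← div_eq_mul_inv] at hjac
  refine ⟨hjac, key1, key2, by linarith, ?_⟩
  calc |(inner ℝ z1 z2 : ℝ)| ≤ (2*c+2*c^2)/E := hp
    _ ≤ (2*(c^2 + c + (2*c+2*c^2)^2) + (2*c+2*c^2) + 1) / E := by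
        rw [div_le_div_iff₀ hE0 hE0]; nlinarith [sq_nonneg (2*c+2*c^2)]
end

section
/- Let A be a nonempty finite type and let M : ℝ → Matrix A A ℝ, λ : ℝ → ℝ, v^l : ℝ → (A → ℝ), v^r : ℝ → (A → ℝ) all be differentiable at β_0, and suppose that for all β in a neighbourhood of β_0 one has the left and right eigenvector relations M(β)·v^r(β) = λ(β)·v^r(β) and (v^l(β))ᵀ·M(β) = λ(β)·(v^l(β))ᵀ, together with the normalization ⟨v^l(β), v^r(β)⟩ = 1. Then the derivative of the eigenvalue is given by the first-order perturbation formula λ'(β_0) = ⟨v^l(β_0), M'(β_0)·v^r(β_0)⟩, where M'(β_0) is the entrywise derivative of M at β_0 and ⟨u, w⟩ = Σ_{a ∈ A} u(a)·w(a). -/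
/-! Statement 13: first-order perturbation formula for a simple eigenvalue:
`λ'(β₀) = ⟨v^l(β₀), M'(β₀) v^r(β₀)⟩` for a differentiable family of matrices with
differentiable left/right eigenvector families, normalized by `⟨v^l, v^r⟩ = 1`. -/

theorem stmt13 {A : Type*} [Fintype A] [Nonempty A] [DecidableEq A]
    (M : ℝ → Matrix A A ℝ) (lam : ℝ → ℝ) (vl vr : ℝ → (A → ℝ)) (β₀ : ℝ)
    (M' : Matrix A A ℝ) (lam' : ℝ) (vl' vr' : A → ℝ)
    (hM : ∀ a b, HasDerivAt (fun β => M β a b) (M' a b) β₀)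
    (hlam : HasDerivAt lam lam' β₀)
    (hvl : ∀ a, HasDerivAt (fun β => vl β a) (vl' a) β₀)
    (hvr : ∀ a, HasDerivAt (fun β => vr β a) (vr' a) β₀)
    (heig : ∀ᶠ β in nhds β₀,
      (M β).mulVec (vr β) = lam β • vr β ∧
      Matrix.vecMul (vl β) (M β) = lam β • vl β ∧
      ∑ a, vl β a * vr β a = 1) :
    lam' = ∑ a, vl β₀ a * (M'.mulVec (vr β₀)) a := by
  obtain ⟨hr0, hl0, hn0⟩ := heig.self_of_nhds
  -- derivative of the normalization
  have hg : HasDerivAt (fun β => ∑ a, vl β a * vr β a)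
      (∑ a, (vl' a * vr β₀ a + vl β₀ a * vr' a)) β₀ :=
    HasDerivAt.fun_sum fun a _ => (hvl a).mul (hvr a)
  have hg1 : (fun β => ∑ a, vl β a * vr β a) =ᶠ[nhds β₀] fun _ => (1 : ℝ) :=
    heig.mono fun β hβ => hβ.2.2
  have hgzero : (∑ a, (vl' a * vr β₀ a + vl β₀ a * vr' a)) = 0 :=
    hg.unique ((hasDerivAt_const β₀ (1 : ℝ)).congr_of_eventuallyEq hg1)
  -- the bilinear form
  set D : ℝ := ∑ a, ∑ b, ((vl' a * M β₀ a b + vl β₀ a * M' a b) * vr β₀ b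
      + vl β₀ a * M β₀ a b * vr' b) with hD
  have hf : HasDerivAt (fun β => ∑ a, ∑ b, vl β a * M β a b * vr β b) D β₀ :=
    HasDerivAt.fun_sum fun a _ => HasDerivAt.fun_sum fun b _ =>
      (((hvl a).mul (hM a b)).mul (hvr b))
  have hflam : (fun β => ∑ a, ∑ b, vl β a * M β a b * vr β b) =ᶠ[nhds β₀] lam := by
    refine heig.mono fun β hβ => ?_
    obtain ⟨hr, _, hn⟩ := hβ
    calc ∑ a, ∑ b, vl β a * M β a b * vr β b
        = ∑ a, vl β a * (M β).mulVec (vr β) a := by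
          simp [Matrix.mulVec, dotProduct, Finset.mul_sum, mul_assoc]
      _ = ∑ a, vl β a * (lam β * vr β a) := by rw [hr]; simp [Pi.smul_apply, smul_eq_mul]
      _ = lam β * ∑ a, vl β a * vr β a := by rw [Finset.mul_sum]; exact Finset.sum_congr rfl fun a _ => by ring
      _ = lam β := by rw [hn, mul_one]
  have hDlam : lam' = D := (hlam.congr_of_eventuallyEq hflam).unique hf
  -- split D into three sums
  have hsplit : D = (∑ a, ∑ b, vl' a * M β₀ a b * vr β₀ b)
      + (∑ a, ∑ b, vl β₀ a * M' a b * vr β₀ b)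
      + (∑ a, ∑ b, vl β₀ a * M β₀ a b * vr' b) := by
    rw [hD]
    rw [← Finset.sum_add_distrib, ← Finset.sum_add_distrib]
    congr 1; ext a
    rw [← Finset.sum_add_distrib, ← Finset.sum_add_distrib]
    congr 1; ext b; ring
  have hS1 : (∑ a, ∑ b, vl' a * M β₀ a b * vr β₀ b)
      = lam β₀ * ∑ a, vl' a * vr β₀ a := by
    have : ∀ a, ∑ b, vl' a * M β₀ a b * vr β₀ b = vl' a * (M β₀).mulVec (vr β₀) a := by
      intro a; simp [Matrix.mulVec, dotProduct, Finset.mul_sum, mul_assoc]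
    simp only [this, hr0, Pi.smul_apply, smul_eq_mul, Finset.mul_sum]
    congr 1; ext a; ring
  have hS3 : (∑ a, ∑ b, vl β₀ a * M β₀ a b * vr' b)
      = lam β₀ * ∑ a, vl β₀ a * vr' a := by
    rw [Finset.sum_comm]
    have : ∀ b, ∑ a, vl β₀ a * M β₀ a b * vr' b
        = (Matrix.vecMul (vl β₀) (M β₀)) b * vr' b := by
      intro b; simp [Matrix.vecMul, dotProduct, Finset.sum_mul]
    simp only [this, hl0, Pi.smul_apply, smul_eq_mul, Finset.mul_sum]
    congr 1; ext a; ring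
  have hS2 : (∑ a, ∑ b, vl β₀ a * M' a b * vr β₀ b)
      = ∑ a, vl β₀ a * (M'.mulVec (vr β₀)) a := by
    congr 1; ext a; simp [Matrix.mulVec, dotProduct, Finset.mul_sum, mul_assoc]
  rw [hDlam, hsplit, hS1, hS2, hS3]
  have : lam β₀ * ∑ a, vl' a * vr β₀ a + lam β₀ * ∑ a, vl β₀ a * vr' a
      = lam β₀ * ∑ a, (vl' a * vr β₀ a + vl β₀ a * vr' a) := by
    rw [Finset.sum_add_distrib]; ring
  linarith [this, hgzero, mul_eq_zero_of_right (lam β₀) hgzero]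
end
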